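/- arXiv:2011.15071 — 4 statements merged into one kernel-verified Lean document; each statement's English description precedes it below -/
import Mathlib

section
/- Let (X, μ) be a finite nonatomic measure space and f ∈ L¹(X, μ). Then for every real t with 0 ≤ t ≤ μ(X), there exists a measurable set E ⊆ X with μ(E) = t such that for every measurable set F ⊆ X with μ(F) = t, ∫_F f dμ ≤ ∫_E f dμ. -/
open MeasureTheory Set
open scoped ENNReal

noncomputable section

/-- Decreasing rearrangement of `f` with respect to the measure `μ`:
`f*(s) = inf {c : μ {f > c} ≤ s}`. -/
def decRearr {X : Type*} [MeasurableSpace X] (μ : Measure X) (f : X → ℝ) (s : ℝ) : ℝ :=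
  sInf {c : ℝ | μ {x | c < f x} ≤ ENNReal.ofReal s}

/-- A measure is nonatomic if every set of positive measure has a measurable subset of
strictly smaller positive measure. -/
def IsNonatomic {X : Type*} [MeasurableSpace X] (μ : Measure X) : Prop :=
  ∀ s : Set X, MeasurableSet s → μ s ≠ 0 →
    ∃ t, t ⊆ s ∧ MeasurableSet t ∧ 0 < μ t ∧ μ t < μ s

lemma half_lemma {X : Type*} [MeasurableSpace X] {μ : Measure X} [IsFiniteMeasure μ]
    (hna : IsNonatomic μ) {s : Set X} (hs : MeasurableSet s) (h0 : μ s ≠ 0) :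
    ∃ t, t ⊆ s ∧ MeasurableSet t ∧ 0 < μ t ∧ μ t ≤ μ s / 2 := by
  obtain ⟨t, hts, htm, ht0, htlt⟩ := hna s hs h0
  rcases le_or_gt (μ t) (μ s / 2) with h | h
  · exact ⟨t, hts, htm, ht0, h⟩
  · refine ⟨s \ t, diff_subset, hs.diff htm, ?_, ?_⟩
    · have := measure_diff hts htm.nullMeasurableSet (measure_ne_top μ t)
      rw [this]
      exact tsub_pos_of_lt htlt
    · have hd := measure_diff hts htm.nullMeasurableSet (measure_ne_top μ t)
      rw [hd]
      refine tsub_le_iff_right.2 ?_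
      calc μ s = μ s / 2 + μ s / 2 := (ENNReal.add_halves _).symm
      _ ≤ μ s / 2 + μ t := by exact add_le_add_right h.le _


lemma small_lemma {X : Type*} [MeasurableSpace X] {μ : Measure X} [IsFiniteMeasure μ]
    (hna : IsNonatomic μ) {s : Set X} (hs : MeasurableSet s) (h0 : μ s ≠ 0)
    {ε : ℝ≥0∞} (hε : ε ≠ 0) :
    ∃ t, t ⊆ s ∧ MeasurableSet t ∧ 0 < μ t ∧ μ t ≤ ε := by
  have key : ∀ n : ℕ, ∃ t, t ⊆ s ∧ MeasurableSet t ∧ 0 < μ t ∧ μ t ≤ μ s / 2 ^ n := by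
    intro n
    induction n with
    | zero => exact ⟨s, subset_rfl, hs, pos_iff_ne_zero.2 h0, by simp⟩
    | succ n ih =>
      obtain ⟨t, hts, htm, ht0, hle⟩ := ih
      obtain ⟨u, hut, hum, hu0, hule⟩ := half_lemma hna htm ht0.ne'
      refine ⟨u, hut.trans hts, hum, hu0, ?_⟩
      calc μ u ≤ μ t / 2 := hule
      _ ≤ μ s / 2 ^ n / 2 := by gcongr
      _ = μ s / 2 ^ (n + 1) := by
        rw [pow_succ, div_eq_mul_inv (a := μ s) (b := 2 ^ n * 2),
          ENNReal.mul_inv (by simp) (by simp), ← mul_assoc, ← div_eq_mul_inv,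
          ← div_eq_mul_inv]
  obtain ⟨n, hn⟩ : ∃ n : ℕ, μ s / 2 ^ n ≤ ε := by
    have hδ : ε / μ s ≠ 0 := by
      simp [ENNReal.div_eq_zero_iff, hε, measure_ne_top μ s]
    obtain ⟨n, hn⟩ := ENNReal.exists_inv_two_pow_lt hδ
    refine ⟨n, ?_⟩
    have : μ s / 2 ^ n = μ s * 2⁻¹ ^ n := by
      rw [div_eq_mul_inv, ENNReal.inv_pow]
    rw [this]
    calc μ s * 2⁻¹ ^ n ≤ μ s * (ε / μ s) := mul_le_mul_right hn.le _
    _ = ε := ENNReal.mul_div_cancel h0 (measure_ne_top μ s)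
  obtain ⟨t, h1, h2, h3, h4⟩ := key n
  exact ⟨t, h1, h2, h3, h4.trans hn⟩

lemma sierpinski {X : Type*} [MeasurableSpace X] {μ : Measure X} [IsFiniteMeasure μ]
    (hna : IsNonatomic μ) {s : Set X} (hs : MeasurableSet s) {r : ℝ≥0∞} (hr : r ≤ μ s) :
    ∃ t, t ⊆ s ∧ MeasurableSet t ∧ μ t = r := by
  classical
  set Good : Set X → Prop := fun t => t ⊆ s ∧ MeasurableSet t ∧ μ t ≤ r with hGood
  set A : Set X → Set ℝ≥0∞ := fun t =>
    {m | ∃ u, u ⊆ s \ t ∧ MeasurableSet u ∧ μ t + μ u ≤ r ∧ μ u = m} with hA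
  set δ : Set X → ℝ≥0∞ := fun t => sSup (A t) with hδ
  have hδle : ∀ t, Good t → δ t ≤ r := by
    intro t ht
    refine sSup_le ?_
    rintro m ⟨u, -, -, hle, rfl⟩
    exact le_trans (le_add_self) hle
  have step : ∀ t, Good t → ∃ t', Good t' ∧ t ⊆ t' ∧ δ t / 2 ≤ μ (t' \ t) := by
    intro t ht
    rcases eq_or_ne (δ t) 0 with h0 | h0
    · exact ⟨t, ht, subset_rfl, by simp [h0]⟩
    · have hlt : δ t / 2 < δ t :=
        ENNReal.half_lt_self h0 (lt_of_le_of_lt (hδle t ht) (lt_of_le_of_lt hr (measure_lt_top μ s))).ne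
      obtain ⟨m, hm, hm2⟩ := (lt_sSup_iff).1 hlt
      obtain ⟨u, hus, hum, hurle, rfl⟩ := hm
      refine ⟨t ∪ u, ⟨union_subset ht.1 (hus.trans diff_subset), ht.2.1.union hum, ?_⟩, subset_union_left, ?_⟩
      · exact le_trans (measure_union_le _ _) hurle
      · have : (t ∪ u) \ t = u := by
          rw [union_diff_left, sdiff_eq_left]
          exact disjoint_left.2 fun x hx hxt => (hus hx).2 hxt
        rw [this]
        exact hm2.le
  have hGoodEmpty : Good ∅ := ⟨empty_subset s, MeasurableSet.empty, by simp⟩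
  let next : {p : Set X // Good p} → {p : Set X // Good p} := fun p =>
    ⟨(step p.1 p.2).choose, (step p.1 p.2).choose_spec.1⟩
  let seq : ℕ → {p : Set X // Good p} := fun n => next^[n] ⟨∅, hGoodEmpty⟩
  have hseq_succ : ∀ n, seq (n + 1) = next (seq n) := fun n =>
    Function.iterate_succ_apply' next n _
  have hsub : ∀ n, (seq n).1 ⊆ (seq (n + 1)).1 := by
    intro n; rw [hseq_succ]
    exact (step (seq n).1 (seq n).2).choose_spec.2.1
  have hdelta : ∀ n, δ (seq n).1 / 2 ≤ μ ((seq (n + 1)).1 \ (seq n).1) := by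
    intro n; rw [hseq_succ]
    exact (step (seq n).1 (seq n).2).choose_spec.2.2
  have hmono : Monotone (fun n => (seq n).1) := monotone_nat_of_le_succ hsub
  set T := ⋃ n, (seq n).1 with hT
  have hTs : T ⊆ s := iUnion_subset fun n => (seq n).2.1
  have hTm : MeasurableSet T := MeasurableSet.iUnion fun n => (seq n).2.2.1
  have hTr : μ T ≤ r := by
    rw [hT, (hmono.directed_le).measure_iUnion]
    exact iSup_le fun n => (seq n).2.2.2
  refine ⟨T, hTs, hTm, le_antisymm hTr ?_⟩
  by_contra hlt
  push_neg at hlt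
  have hεpos : r - μ T ≠ 0 := (tsub_pos_of_lt hlt).ne'
  have hdm : μ (s \ T) = μ s - μ T := measure_diff hTs hTm.nullMeasurableSet (measure_ne_top μ T)
  have hsT0 : μ (s \ T) ≠ 0 := by
    rw [hdm]
    exact (tsub_pos_of_lt (lt_of_lt_of_le hlt hr)).ne'
  obtain ⟨u, hus, hum, hu0, hule⟩ := small_lemma hna (hs.diff hTm) hsT0 hεpos
  -- μ u / 2 ≤ δ (seq n) / 2 ≤ μ (seq (n+1) \ seq n) for all n
  have hkey : ∀ n, μ u / 2 ≤ μ ((seq (n + 1)).1 \ (seq n).1) := by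
    intro n
    refine le_trans ?_ (hdelta n)
    refine ENNReal.div_le_div_right ?_ 2
    refine le_sSup ?_
    refine ⟨u, ?_, hum, ?_, rfl⟩
    · exact hus.trans (diff_subset_diff_right (subset_iUnion (fun n => (seq n).1) n))
    · calc μ (seq n).1 + μ u ≤ μ T + (r - μ T) :=
        add_le_add (measure_mono (subset_iUnion (fun n => (seq n).1) n)) hule
      _ = r := add_tsub_cancel_of_le hlt.le
  -- the increments are pairwise disjoint subsets of s
  have hdisj : Pairwise (Function.onFun Disjoint (fun n => (seq (n + 1)).1 \ (seq n).1)) := by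
    intro m n hmn
    wlog h : m < n generalizing m n
    · exact (this hmn.symm (hmn.lt_or_gt.resolve_left h)).symm
    refine Disjoint.mono_left (diff_subset.trans (hmono h)) ?_
    exact disjoint_sdiff_right
  have hsum : ∑' n, μ ((seq (n + 1)).1 \ (seq n).1) ≤ μ s := by
    rw [← measure_iUnion hdisj fun n => (seq (n + 1)).2.2.1.diff (seq n).2.2.1]
    exact measure_mono (iUnion_subset fun n => diff_subset.trans (seq (n + 1)).2.1)
  have hbot : (∑' _ : ℕ, μ u / 2) ≤ μ s := le_trans (ENNReal.tsum_le_tsum hkey) hsum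
  have hhalf : μ u / 2 ≠ 0 := by
    simp only [ne_eq, ENNReal.div_eq_zero_iff]
    push_neg
    exact ⟨hu0.ne', ENNReal.ofNat_ne_top⟩
  rw [ENNReal.tsum_const_eq_top_of_ne_zero hhalf] at hbot
  exact absurd (top_le_iff.1 hbot) (measure_ne_top μ s)

/-- On a finite nonatomic measure space, the supremum defining the star function is
attained: there is a set of measure `t` maximizing `∫_E f dμ` among sets of measure `t`. -/
theorem star_function_sup_attained {X : Type*} [MeasurableSpace X] (μ : Measure X)
    [IsFiniteMeasure μ] (hna : IsNonatomic μ) (f : X → ℝ) (hf : Integrable f μ) :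
    ∀ t : ℝ, 0 ≤ t → t ≤ (μ univ).toReal →
      ∃ E : Set X, MeasurableSet E ∧ μ E = ENNReal.ofReal t ∧
        ∀ F : Set X, MeasurableSet F → μ F = ENNReal.ofReal t →
          ∫ x in F, f x ∂μ ≤ ∫ x in E, f x ∂μ := by
  intro t ht0 htle
  classical
  set g : X → ℝ := hf.1.mk f with hg
  have hgm : Measurable g := hf.1.measurable_mk
  have hfg : f =ᵐ[μ] g := hf.1.ae_eq_mk
  have hgint : Integrable g μ := hf.congr hfg
  have hsame : ∀ F : Set X, ∫ x in F, f x ∂μ = ∫ x in F, g x ∂μ := fun F =>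
    integral_congr_ae (ae_restrict_of_ae hfg)
  suffices h : ∃ E : Set X, MeasurableSet E ∧ μ E = ENNReal.ofReal t ∧
      ∀ F : Set X, MeasurableSet F → μ F = ENNReal.ofReal t →
        ∫ x in F, g x ∂μ ≤ ∫ x in E, g x ∂μ by
    obtain ⟨E, hEm, hEt, hE⟩ := h
    exact ⟨E, hEm, hEt, fun F hFm hFt => by
      rw [hsame F, hsame E]; exact hE F hFm hFt⟩
  by_cases h0 : ENNReal.ofReal t = 0
  · refine ⟨∅, MeasurableSet.empty, by simp [h0], fun F hFm hFt => ?_⟩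
    rw [setIntegral_empty]
    have : μ F = 0 := by rw [hFt, h0]
    simp [Measure.restrict_eq_zero.2 this]
  by_cases hT : ENNReal.ofReal t = μ univ
  · refine ⟨univ, MeasurableSet.univ, hT.symm, fun F hFm hFt => ?_⟩
    have hFae : F =ᵐ[μ] (univ : Set X) := by
      rw [Filter.eventuallyEq_set]
      have hcompl : μ Fᶜ = 0 := by
        have := measure_add_measure_compl (μ := μ) hFm
        rw [hFt, hT] at this
        exact (ENNReal.add_right_inj (measure_ne_top μ univ)).1
          (this.trans (add_zero _).symm)
      filter_upwards [measure_eq_zero_iff_ae_notMem.1 hcompl] with x hx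
      simp at hx ⊢
      exact hx
    exact le_of_eq (setIntegral_congr_set hFae)
  -- main case
  have htpos : 0 < ENNReal.ofReal t := pos_iff_ne_zero.2 h0
  have htlt : ENNReal.ofReal t < μ univ := by
    refine lt_of_le_of_ne ?_ hT
    calc ENNReal.ofReal t ≤ ENNReal.ofReal (μ univ).toReal := ENNReal.ofReal_le_ofReal htle
    _ = μ univ := ENNReal.ofReal_toReal (measure_ne_top μ _)
  set A : Set ℝ := {c : ℝ | μ {x | c < g x} ≤ ENNReal.ofReal t} with hA
  have hmeas : ∀ c : ℝ, MeasurableSet {x | c < g x} := fun c =>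
    hgm measurableSet_Ioi
  have hAne : A.Nonempty := by
    have hanti : Antitone (fun n : ℕ => {x | (n : ℝ) < g x}) := by
      intro m n hmn x hx
      simp only [mem_setOf_eq] at hx ⊢
      exact lt_of_le_of_lt (by exact_mod_cast hmn) hx
    have hint : (⋂ n : ℕ, {x | (n : ℝ) < g x}) = ∅ := by
      ext x
      simp only [mem_iInter, mem_setOf_eq, mem_empty_iff_false, iff_false, not_forall, not_lt]
      obtain ⟨n, hn⟩ := exists_nat_gt (g x)
      exact ⟨n, hn.le⟩
    have hten : Filter.Tendsto (fun n : ℕ => μ {x | (n : ℝ) < g x}) Filter.atTop (nhds 0) := by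
      have := tendsto_measure_iInter_atTop (fun n => (hmeas _).nullMeasurableSet) hanti
        ⟨0, measure_ne_top μ _⟩
      rw [hint, measure_empty] at this
      exact this
    obtain ⟨n, hn⟩ := (hten.eventually_lt_const htpos).exists
    exact ⟨n, hn.le⟩
  have hAbdd : BddBelow A := by
    have hmono : Monotone (fun n : ℕ => {x | -(n : ℝ) < g x}) := by
      intro m n hmn x hx
      simp only [mem_setOf_eq] at hx ⊢
      refine lt_of_le_of_lt ?_ hx
      simp only [neg_le_neg_iff]
      exact_mod_cast hmn
    have huni : (⋃ n : ℕ, {x | -(n : ℝ) < g x}) = univ := by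
      ext x
      simp only [mem_iUnion, mem_setOf_eq, mem_univ, iff_true]
      obtain ⟨n, hn⟩ := exists_nat_gt (-(g x))
      exact ⟨n, by linarith⟩
    have hten : Filter.Tendsto (fun n : ℕ => μ {x | -(n : ℝ) < g x}) Filter.atTop
        (nhds (μ univ)) := by
      have := tendsto_measure_iUnion_atTop (μ := μ) hmono
      rwa [huni] at this
    obtain ⟨n, hn⟩ := (hten.eventually_const_lt htlt).exists
    refine ⟨-(n : ℝ), fun c hc => ?_⟩
    by_contra hcn
    push_neg at hcn
    have : {x | -(n : ℝ) < g x} ⊆ {x | c < g x} := fun x hx => lt_trans hcn hx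
    exact absurd (le_trans (measure_mono this) hc) (not_le.2 hn)
  set c : ℝ := sInf A with hc
  have hc1 : μ {x | c < g x} ≤ ENNReal.ofReal t := by
    have hU : {x | c < g x} = ⋃ n : ℕ, {x | c + 1 / (n + 1) < g x} := by
      ext x
      simp only [mem_setOf_eq, mem_iUnion]
      constructor
      · intro hx
        obtain ⟨n, hn⟩ := exists_nat_one_div_lt (sub_pos.2 hx)
        exact ⟨n, by push_cast at hn ⊢; linarith⟩
      · rintro ⟨n, hn⟩
        have : (0:ℝ) < 1 / (n + 1) := by positivity
        linarith
    have hmono : Monotone (fun n : ℕ => {x | c + 1 / ((n : ℝ) + 1) < g x}) := by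
      intro m n hmn x hx
      simp only [mem_setOf_eq] at hx ⊢
      have h1 : (1:ℝ) / ((n:ℝ) + 1) ≤ 1 / ((m:ℝ) + 1) := by
        apply one_div_le_one_div_of_le
        · positivity
        · have : (m:ℝ) ≤ n := by exact_mod_cast hmn
          linarith
      linarith
    rw [hU, hmono.directed_le.measure_iUnion]
    refine iSup_le fun n => ?_
    have hlt : c < c + 1 / ((n : ℝ) + 1) := by
      have : (0:ℝ) < 1 / ((n:ℝ) + 1) := by positivity
      linarith
    obtain ⟨c', hc'A, hc'lt⟩ := (csInf_lt_iff hAbdd hAne).1 hlt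
    refine le_trans (measure_mono ?_) hc'A
    intro x hx
    exact lt_trans hc'lt hx
  have hc2 : ENNReal.ofReal t ≤ μ {x | c ≤ g x} := by
    have hI : {x | c ≤ g x} = ⋂ n : ℕ, {x | c - 1 / ((n:ℝ) + 1) < g x} := by
      ext x
      simp only [mem_setOf_eq, mem_iInter]
      constructor
      · intro hx n
        have : (0:ℝ) < 1 / ((n:ℝ) + 1) := by positivity
        linarith
      · intro hx
        by_contra hcx
        push_neg at hcx
        obtain ⟨n, hn⟩ := exists_nat_one_div_lt (sub_pos.2 hcx)
        have := hx n
        push_cast at hn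
        linarith
    have hanti : Antitone (fun n : ℕ => {x | c - 1 / ((n:ℝ) + 1) < g x}) := by
      intro m n hmn x hx
      simp only [mem_setOf_eq] at hx ⊢
      have h1 : (1:ℝ) / ((n:ℝ) + 1) ≤ 1 / ((m:ℝ) + 1) := by
        apply one_div_le_one_div_of_le
        · positivity
        · have : (m:ℝ) ≤ n := by exact_mod_cast hmn
          linarith
      linarith
    have hten : Filter.Tendsto (fun n : ℕ => μ {x | c - 1 / ((n:ℝ) + 1) < g x}) Filter.atTop
        (nhds (μ {x | c ≤ g x})) := by
      have := tendsto_measure_iInter_atTop (fun n => (hmeas _).nullMeasurableSet) hanti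
        ⟨0, measure_ne_top μ _⟩
      rwa [← hI] at this
    refine ge_of_tendsto hten (Filter.Eventually.of_forall fun n => ?_)
    have hnotin : c - 1 / ((n:ℝ) + 1) ∉ A := by
      intro hmem
      have := csInf_le hAbdd hmem
      have hpos : (0:ℝ) < 1 / ((n:ℝ) + 1) := by positivity
      rw [← hc] at this
      linarith
    simp only [hA, mem_setOf_eq, not_le] at hnotin
    exact hnotin.le
  -- split off the part of measure r inside {g = c}
  have hEq : MeasurableSet {x | g x = c} := hgm (measurableSet_singleton c)
  have hsplit : μ {x | c ≤ g x} = μ {x | c < g x} + μ {x | g x = c} := by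
    have hun : {x | c ≤ g x} = {x | c < g x} ∪ {x | g x = c} := by
      ext x
      simp only [mem_setOf_eq, mem_union]
      constructor
      · intro h; rcases lt_or_eq_of_le h with h | h
        · exact Or.inl h
        · exact Or.inr h.symm
      · rintro (h | h)
        · exact h.le
        · exact h.ge
    rw [hun, measure_union _ hEq]
    exact disjoint_left.2 fun x hx hx2 => absurd hx2 (by simp [mem_setOf_eq] at hx ⊢; linarith)
  have hrle : ENNReal.ofReal t - μ {x | c < g x} ≤ μ {x | g x = c} := by
    refine tsub_le_iff_left.2 ?_
    rw [← hsplit]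
    exact hc2
  obtain ⟨S, hSsub, hSm, hSμ⟩ := sierpinski hna hEq hrle
  set E : Set X := {x | c < g x} ∪ S with hE
  have hEm : MeasurableSet E := (hmeas c).union hSm
  have hdisjE : Disjoint {x | c < g x} S := by
    refine disjoint_left.2 fun x hx hxS => ?_
    have := hSsub hxS
    simp only [mem_setOf_eq] at hx this
    linarith
  have hEμ : μ E = ENNReal.ofReal t := by
    rw [hE, measure_union hdisjE hSm, hSμ, add_tsub_cancel_of_le hc1]
  refine ⟨E, hEm, hEμ, fun F hFm hFμ => ?_⟩
  have hge : ∀ x ∈ E, c ≤ g x := by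
    rintro x (hx | hx)
    · exact (le_of_lt hx)
    · exact (hSsub hx).ge
  have hle : ∀ x ∉ E, g x ≤ c := by
    intro x hx
    by_contra hgt
    push_neg at hgt
    exact hx (Or.inl hgt)
  -- measure equality of the differences
  have hμd : μ (E \ F) = μ (F \ E) := by
    have h1 := measure_inter_add_diff (μ := μ) E hFm
    have h2 := measure_inter_add_diff (μ := μ) F hEm
    rw [hEμ] at h1
    rw [hFμ, inter_comm] at h2
    rw [← h2] at h1
    exact (ENNReal.add_right_inj (measure_ne_top μ _)).1 h1
  have hiEF : IntegrableOn g (E \ F) μ := hgint.integrableOn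
  have hiFE : IntegrableOn g (F \ E) μ := hgint.integrableOn
  have hlow : (μ (E \ F)).toReal * c ≤ ∫ x in E \ F, g x ∂μ := by
    have := setIntegral_mono_on (integrableOn_const (measure_ne_top μ _))
      hiEF (hEm.diff hFm) (fun x hx => hge x hx.1)
    rwa [setIntegral_const, smul_eq_mul] at this
  have hupp : ∫ x in F \ E, g x ∂μ ≤ (μ (F \ E)).toReal * c := by
    have := setIntegral_mono_on hiFE (integrableOn_const (measure_ne_top μ _))
      (hFm.diff hEm) (fun x hx => hle x hx.2)
    rwa [setIntegral_const, smul_eq_mul] at this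
  have hFdec : ∫ x in F, g x ∂μ = ∫ x in F ∩ E, g x ∂μ + ∫ x in F \ E, g x ∂μ :=
    (integral_inter_add_diff hEm hgint.integrableOn).symm
  have hEdec : ∫ x in E, g x ∂μ = ∫ x in E ∩ F, g x ∂μ + ∫ x in E \ F, g x ∂μ :=
    (integral_inter_add_diff hFm hgint.integrableOn).symm
  rw [hFdec, hEdec, inter_comm F E]
  have : (μ (F \ E)).toReal * c = (μ (E \ F)).toReal * c := by rw [hμd]
  linarith
end
end

section
/- Let (X, μ) be a finite nonatomic measure space and f ∈ L¹(X, μ). Then for every real t with 0 ≤ t ≤ μ(X), sup{∫_E f dμ : E ⊆ X measurable, μ(E) = t} = ∫₀ᵗ f*(s) ds, where f* is the decreasing rearrangement of f. -/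
open MeasureTheory Set Filter
open scoped ENNReal

noncomputable section

namespace StarAux

variable {X : Type*} [MeasurableSpace X] {μ : Measure X}

lemma half (hna : IsNonatomic μ) [IsFiniteMeasure μ] {A : Set X} (hA : MeasurableSet A)
    (h0 : μ A ≠ 0) : ∃ B, B ⊆ A ∧ MeasurableSet B ∧ 0 < μ B ∧ μ B ≤ μ A * 2⁻¹ := by
  obtain ⟨t, hts, htm, ht0, htlt⟩ := hna A hA h0
  rcases le_or_gt (μ t) (μ A * 2⁻¹) with h | h
  · exact ⟨t, hts, htm, ht0, h⟩
  · have hmd : μ (A \ t) = μ A - μ t := measure_diff hts htm.nullMeasurableSet (measure_ne_top μ t)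
    refine ⟨A \ t, diff_subset, hA.diff htm, ?_, ?_⟩
    · rw [hmd]; exact tsub_pos_of_lt htlt
    · rw [hmd, tsub_le_iff_right]
      calc μ A = μ A * 2⁻¹ + μ A * 2⁻¹ := by
            rw [← mul_add, ENNReal.inv_two_add_inv_two, mul_one]
        _ ≤ μ A * 2⁻¹ + μ t := add_le_add_right h.le _

lemma small (hna : IsNonatomic μ) [IsFiniteMeasure μ] {A : Set X} (hA : MeasurableSet A)
    (h0 : μ A ≠ 0) {ε : ℝ≥0∞} (hε : ε ≠ 0) :
    ∃ B, B ⊆ A ∧ MeasurableSet B ∧ 0 < μ B ∧ μ B ≤ ε := by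
  have key : ∀ n : ℕ, ∃ B, B ⊆ A ∧ MeasurableSet B ∧ 0 < μ B ∧ μ B ≤ μ A * 2⁻¹ ^ n := by
    intro n
    induction n with
    | zero => exact ⟨A, subset_rfl, hA, pos_iff_ne_zero.2 h0, by simp⟩
    | succ n ih =>
      obtain ⟨B, hBA, hBm, hB0, hBle⟩ := ih
      obtain ⟨C, hCB, hCm, hC0, hCle⟩ := half hna hBm hB0.ne'
      refine ⟨C, hCB.trans hBA, hCm, hC0, hCle.trans ?_⟩
      rw [pow_succ]
      calc μ B * 2⁻¹ ≤ μ A * 2⁻¹ ^ n * 2⁻¹ := mul_le_mul_left hBle _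
        _ = μ A * (2⁻¹ ^ n * 2⁻¹) := by ring
  have htend : Tendsto (fun n : ℕ => μ A * 2⁻¹ ^ n) atTop (nhds 0) := by
    have h1 : Tendsto (fun n : ℕ => (2⁻¹ : ℝ≥0∞) ^ n) atTop (nhds 0) :=
      ENNReal.tendsto_pow_atTop_nhds_zero_of_lt_one (by simp [ENNReal.inv_lt_one])
    simpa using ENNReal.Tendsto.const_mul h1 (Or.inr (measure_ne_top μ A))
  obtain ⟨n, hn⟩ : ∃ n : ℕ, μ A * 2⁻¹ ^ n < ε :=
    (htend.eventually_lt_const (pos_iff_ne_zero.2 hε)).exists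
  obtain ⟨B, h1, h2, h3, h4⟩ := key n
  exact ⟨B, h1, h2, h3, h4.trans hn.le⟩

lemma exists_subset_measure_eq (hna : IsNonatomic μ) [IsFiniteMeasure μ] {A : Set X}
    (hA : MeasurableSet A) {r : ℝ≥0∞} (hr : r ≤ μ A) :
    ∃ B, B ⊆ A ∧ MeasurableSet B ∧ μ B = r := by
  rcases eq_or_lt_of_le hr with heq | hlt
  · exact ⟨A, subset_rfl, hA, heq.symm⟩
  have hrt : r ≠ ∞ := (hr.trans_lt (measure_lt_top μ A)).ne
  let T := {B : Set X // B ⊆ A ∧ MeasurableSet B ∧ μ B ≤ r}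
  have step : ∀ B : T, ∃ B' : T, B.1 ⊆ B'.1 ∧
      ∀ C, C ⊆ A \ B.1 → MeasurableSet C → μ C ≤ r - μ B.1 → μ B.1 + μ C / 2 ≤ μ B'.1 := by
    rintro ⟨B, hBA, hBm, hBr⟩
    set Q : Set ℝ≥0∞ := {m | ∃ C, C ⊆ A \ B ∧ MeasurableSet C ∧ μ C ≤ r - μ B ∧ μ C = m} with hQ
    set δ := sSup Q with hδ
    have hδle : δ ≤ r - μ B := sSup_le (by rintro m ⟨C, -, -, hCle, rfl⟩; exact hCle)
    have hδt : δ ≠ ∞ := (hδle.trans_lt (lt_of_le_of_lt tsub_le_self hrt.lt_top)).ne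
    have hC0 : ∃ C, C ⊆ A \ B ∧ MeasurableSet C ∧ μ C ≤ r - μ B ∧ δ / 2 ≤ μ C := by
      rcases eq_or_ne δ 0 with h0 | h0
      · exact ⟨∅, empty_subset _, MeasurableSet.empty, by simp, by simp [h0]⟩
      · have hh : δ / 2 < δ := ENNReal.half_lt_self h0 hδt
        obtain ⟨m, hm, hlt'⟩ := lt_sSup_iff.mp hh
        obtain ⟨C, hC1, hC2, hC3, rfl⟩ := hm
        exact ⟨C, hC1, hC2, hC3, hlt'.le⟩
    obtain ⟨C₀, hC₀A, hC₀m, hC₀r, hC₀δ⟩ := hC0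
    have hdisj : Disjoint B C₀ := disjoint_of_subset_right hC₀A disjoint_sdiff_right
    have hmu : μ (B ∪ C₀) = μ B + μ C₀ := measure_union' hdisj hBm
    refine ⟨⟨B ∪ C₀, union_subset hBA (hC₀A.trans diff_subset), hBm.union hC₀m, ?_⟩,
        subset_union_left, ?_⟩
    · rw [hmu]
      calc μ B + μ C₀ ≤ μ B + (r - μ B) := add_le_add_right hC₀r _
        _ = r := add_tsub_cancel_of_le hBr
    · intro C hC1 hC2 hC3
      have hCδ : μ C ≤ δ := le_sSup ⟨C, hC1, hC2, hC3, rfl⟩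
      calc μ B + μ C / 2 ≤ μ B + δ / 2 := add_le_add_right (ENNReal.div_le_div_right hCδ 2) _
        _ ≤ μ B + μ C₀ := add_le_add_right hC₀δ _
        _ = μ (B ∪ C₀) := hmu.symm
  choose F hF1 hF2 using step
  let seq : ℕ → T := fun n => F^[n] ⟨∅, empty_subset _, MeasurableSet.empty, by simp⟩
  have hseq_succ : ∀ n, seq (n + 1) = F (seq n) := fun n => Function.iterate_succ_apply' _ _ _
  have hmono : Monotone fun n => (seq n).1 := by
    apply monotone_nat_of_le_succ
    intro n; rw [hseq_succ]; exact hF1 _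
  set B' := ⋃ n, (seq n).1 with hBinf
  have hBm' : ∀ n, MeasurableSet (seq n).1 := fun n => (seq n).2.2.1
  have hBA' : ∀ n, (seq n).1 ⊆ A := fun n => (seq n).2.1
  have hBr' : ∀ n, μ (seq n).1 ≤ r := fun n => (seq n).2.2.2
  have hB'm : MeasurableSet B' := MeasurableSet.iUnion hBm'
  have hB'A : B' ⊆ A := iUnion_subset hBA'
  have hB'μ : μ B' = ⨆ n, μ (seq n).1 := hmono.directed_le.measure_iUnion
  have hB'r : μ B' ≤ r := by rw [hB'μ]; exact iSup_le hBr'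
  rcases eq_or_lt_of_le hB'r with heq | hlt2
  · exact ⟨B', hB'A, hB'm, heq⟩
  exfalso
  have hAB : μ A ≤ μ B' + μ (A \ B') := by
    conv_lhs => rw [← union_diff_cancel hB'A]
    exact measure_union_le _ _
  have hdne : μ (A \ B') ≠ 0 := by
    intro h
    rw [h, add_zero] at hAB
    exact ((hlt.trans_le hAB).not_ge hB'r).elim
  have hε : r - μ B' ≠ 0 := (tsub_pos_of_lt hlt2).ne'
  obtain ⟨C, hC1, hC2, hC3, hC4⟩ := small hna (hA.diff hB'm) hdne hε
  have hCn : ∀ n, μ (seq n).1 + μ C / 2 ≤ μ (seq (n + 1)).1 := by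
    intro n
    rw [hseq_succ]
    refine hF2 (seq n) C (hC1.trans (diff_subset_diff_right (hBinf ▸ subset_iUnion (fun n => ((seq n : T) : Set X)) n))) hC2
      (hC4.trans (tsub_le_tsub_left (measure_mono (subset_iUnion (fun n => (seq n).1) n)) r))
  have hgrow : ∀ n : ℕ, (n : ℝ≥0∞) * (μ C / 2) ≤ μ (seq n).1 := by
    intro n
    induction n with
    | zero => simp
    | succ n ih =>
      calc ((n + 1 : ℕ) : ℝ≥0∞) * (μ C / 2) = (n : ℝ≥0∞) * (μ C / 2) + μ C / 2 := by
            push_cast; ring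
        _ ≤ μ (seq n).1 + μ C / 2 := add_le_add_left ih _
        _ ≤ μ (seq (n + 1)).1 := hCn n
  have hC20 : μ C / 2 ≠ 0 := by
    simp only [ne_eq, ENNReal.div_eq_zero_iff, not_or]
    exact ⟨hC3.ne', ENNReal.ofNat_ne_top⟩
  obtain ⟨n, hn⟩ := ENNReal.exists_nat_mul_gt hC20 hrt
  exact (hn.trans_le ((hgrow n).trans (hBr' n))).ne rfl

end StarAux

namespace StarAux

variable {X : Type*} [MeasurableSpace X] {μ : Measure X} [IsFiniteMeasure μ] {g : X → ℝ}

lemma d_right_cont {a : ℝ} {m : ℝ≥0∞} (h : ∀ b, a < b → μ {x | b < g x} ≤ m) :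
    μ {x | a < g x} ≤ m := by
  have hmono : Monotone fun n : ℕ => {x | a + 1 / (n + 1) < g x} := by
    intro n k hnk x hx
    simp only [mem_setOf_eq] at *
    have h1 : (1 : ℝ) / (k + 1) ≤ 1 / (n + 1) := by
      apply one_div_le_one_div_of_le (by positivity)
      have : (n : ℝ) ≤ k := Nat.cast_le.mpr hnk
      linarith
    linarith
  have hU : {x | a < g x} = ⋃ n : ℕ, {x | a + 1 / (n + 1) < g x} := by
    ext x
    simp only [mem_setOf_eq, mem_iUnion]
    constructor
    · intro hx
      obtain ⟨n, hn⟩ := exists_nat_one_div_lt (sub_pos.mpr hx)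
      exact ⟨n, by push_cast at hn ⊢; linarith⟩
    · rintro ⟨n, hn⟩
      have hp : (0 : ℝ) < 1 / ((n : ℝ) + 1) := by positivity
      linarith
  rw [hU, hmono.measure_iUnion]
  refine iSup_le fun n => h _ ?_
  have hp : (0:ℝ) < 1 / ((n:ℝ)+1) := by positivity
  linarith

lemma le_level_measure (hgm : Measurable g) {a : ℝ} {m : ℝ≥0∞}
    (h : ∀ b, b < a → m ≤ μ {x | b < g x}) : m ≤ μ {x | a ≤ g x} := by
  have hanti : Antitone fun n : ℕ => {x | a - 1 / (n + 1) < g x} := by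
    intro n k hnk x hx
    simp only [mem_setOf_eq] at *
    have h1 : (1 : ℝ) / (k + 1) ≤ 1 / (n + 1) := by
      apply one_div_le_one_div_of_le (by positivity)
      have : (n : ℝ) ≤ k := Nat.cast_le.mpr hnk
      linarith
    linarith
  have hI : {x | a ≤ g x} = ⋂ n : ℕ, {x | a - 1 / (n + 1) < g x} := by
    ext x
    simp only [mem_setOf_eq, mem_iInter]
    constructor
    · intro hx n
      have hp : (0 : ℝ) < 1 / ((n : ℝ) + 1) := by positivity
      linarith
    · intro hx
      by_contra hc
      push_neg at hc
      obtain ⟨n, hn⟩ := exists_nat_one_div_lt (sub_pos.mpr hc)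
      have := hx n
      push_cast at hn
      linarith
  rw [hI, hanti.measure_iInter (fun n => (measurableSet_lt measurable_const hgm).nullMeasurableSet)
    ⟨0, measure_ne_top μ _⟩]
  refine le_iInf fun n => h _ ?_
  have hp : (0 : ℝ) < 1 / ((n : ℝ) + 1) := by positivity
  linarith

end StarAux

namespace StarAux

variable {X : Type*} [MeasurableSpace X] {μ : Measure X} [IsFiniteMeasure μ] {g : X → ℝ}

lemma Sset_nonempty (hgm : Measurable g) (hgi : Integrable g μ) {s : ℝ} (hs : 0 < s) :
    {c : ℝ | μ {x | c < g x} ≤ ENNReal.ofReal s}.Nonempty := by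
  set L := ∫⁻ x, (‖g x‖₊ : ℝ≥0∞) ∂μ with hL
  have hLt : L ≠ ∞ := hgi.2.ne
  have hst0 : ENNReal.ofReal s ≠ 0 := by simp [hs]
  have hdt : L / ENNReal.ofReal s ≠ ∞ :=
    (ENNReal.div_lt_top hLt hst0).ne
  set c₀ : ℝ := (L / ENNReal.ofReal s).toReal + 1 with hc₀
  have hc₀0 : 0 < c₀ := by positivity
  refine ⟨c₀, ?_⟩
  have hsub : {x | c₀ < g x} ⊆ {x | ENNReal.ofReal c₀ ≤ (‖g x‖₊ : ℝ≥0∞)} := by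
    intro x hx
    simp only [mem_setOf_eq] at *
    rw [← enorm_eq_nnnorm, Real.enorm_eq_ofReal_abs]
    exact ENNReal.ofReal_le_ofReal (hx.le.trans (le_abs_self _))
  have hmark : μ {x | ENNReal.ofReal c₀ ≤ (‖g x‖₊ : ℝ≥0∞)} ≤ L / ENNReal.ofReal c₀ :=
    meas_ge_le_lintegral_div hgm.enorm.aemeasurable (by simp [hc₀0]) ENNReal.ofReal_ne_top
  refine (measure_mono hsub).trans (hmark.trans ?_)
  have h1 : L / ENNReal.ofReal s ≤ ENNReal.ofReal c₀ := by
    rw [hc₀, ENNReal.ofReal_add (ENNReal.toReal_nonneg) zero_le_one,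
      ENNReal.ofReal_toReal hdt, ENNReal.ofReal_one]
    exact le_self_add
  rw [ENNReal.div_le_iff_le_mul (Or.inl (by simp [hc₀0])) (Or.inl ENNReal.ofReal_ne_top)]
  rw [ENNReal.div_le_iff_le_mul (Or.inl hst0) (Or.inl ENNReal.ofReal_ne_top)] at h1
  calc L ≤ ENNReal.ofReal c₀ * ENNReal.ofReal s := h1
    _ = ENNReal.ofReal s * ENNReal.ofReal c₀ := mul_comm _ _

lemma Sset_bddBelow {s : ℝ} (htM : ENNReal.ofReal s < μ univ) :
    BddBelow {c : ℝ | μ {x | c < g x} ≤ ENNReal.ofReal s} := by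
  have hmono : Monotone fun n : ℕ => {x | -(n : ℝ) < g x} := by
    intro n k hnk x hx
    simp only [mem_setOf_eq] at *
    have : (n : ℝ) ≤ k := Nat.cast_le.mpr hnk
    linarith
  have hU : (⋃ n : ℕ, {x | -(n : ℝ) < g x}) = univ := by
    ext x
    simp only [mem_iUnion, mem_univ, iff_true, mem_setOf_eq]
    obtain ⟨n, hn⟩ := exists_nat_gt (-(g x))
    exact ⟨n, by linarith⟩
  have hlt : ENNReal.ofReal s < ⨆ n : ℕ, μ {x | -(n : ℝ) < g x} := by
    rw [← hmono.measure_iUnion, hU]; exact htM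
  obtain ⟨n, hn⟩ := lt_iSup_iff.mp hlt
  refine ⟨-(n : ℝ), fun c hc => ?_⟩
  by_contra hltc
  push_neg at hltc
  exact absurd ((measure_mono fun x hx => hltc.trans hx).trans hc) hn.not_ge

lemma d_decRearr_le (hgm : Measurable g) (hgi : Integrable g μ) {s a : ℝ} (hs : 0 < s)
    (ha : decRearr μ g s ≤ a) : μ {x | a < g x} ≤ ENNReal.ofReal s := by
  apply d_right_cont
  intro b hb
  obtain ⟨c, hc, hcb⟩ := exists_lt_of_csInf_lt (Sset_nonempty hgm hgi hs) (lt_of_le_of_lt ha hb)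
  exact le_trans (measure_mono fun x hx => hcb.trans hx) hc

lemma ofReal_lt_d {s a : ℝ} (htM : ENNReal.ofReal s < μ univ) (ha : a < decRearr μ g s) :
    ENNReal.ofReal s < μ {x | a < g x} := by
  by_contra h
  push_neg at h
  exact absurd (csInf_le (Sset_bddBelow htM) h) ha.not_ge

lemma decRearr_anti (hgm : Measurable g) (hgi : Integrable g μ) {s₁ s₂ : ℝ} (h1 : 0 < s₁)
    (h2 : ENNReal.ofReal s₂ < μ univ) (h12 : s₁ ≤ s₂) : decRearr μ g s₂ ≤ decRearr μ g s₁ :=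
  csInf_le_csInf (Sset_bddBelow h2) (Sset_nonempty hgm hgi h1)
    (fun c hc => hc.trans (ENNReal.ofReal_le_ofReal h12))

lemma levelset (hgm : Measurable g) (hgi : Integrable g μ) (a : ℝ) :
    {s ∈ Ioo (0 : ℝ) (μ univ).toReal | a < decRearr μ g s} =
      Ioo 0 (μ {x | a < g x}).toReal := by
  have hdM : (μ {x | a < g x}).toReal ≤ (μ univ).toReal :=
    ENNReal.toReal_mono (measure_ne_top μ _) (measure_mono (subset_univ _))
  ext s
  simp only [mem_setOf_eq, mem_Ioo]
  constructor
  · rintro ⟨⟨hs0, hsM⟩, ha⟩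
    have htM : ENNReal.ofReal s < μ univ :=
      (ENNReal.ofReal_lt_iff_lt_toReal hs0.le (measure_ne_top μ _)).mpr hsM
    have := ofReal_lt_d htM ha
    exact ⟨hs0, (ENNReal.ofReal_lt_iff_lt_toReal hs0.le (measure_ne_top μ _)).mp this⟩
  · rintro ⟨hs0, hsd⟩
    refine ⟨⟨hs0, lt_of_lt_of_le hsd hdM⟩, ?_⟩
    by_contra h
    push_neg at h
    have := d_decRearr_le hgm hgi hs0 h
    have h2 : (μ {x | a < g x}).toReal ≤ s := by
      calc (μ {x | a < g x}).toReal ≤ (ENNReal.ofReal s).toReal :=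
            ENNReal.toReal_mono ENNReal.ofReal_ne_top this
        _ = s := ENNReal.toReal_ofReal hs0.le
    exact absurd hsd h2.not_gt

end StarAux

namespace StarAux

variable {X : Type*} [MeasurableSpace X] {μ : Measure X} [IsFiniteMeasure μ] {g : X → ℝ}

lemma map_eq (hgm : Measurable g) (hgi : Integrable g μ) :
    Measure.map g μ =
      Measure.map (decRearr μ g) (volume.restrict (Ioo 0 (μ univ).toReal)) := by
  set M := (μ univ).toReal with hM
  have hanti : AntitoneOn (decRearr μ g) (Ioo 0 M) := by
    intro s₁ hs₁ s₂ hs₂ h12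
    exact decRearr_anti hgm hgi hs₁.1
      ((ENNReal.ofReal_lt_iff_lt_toReal hs₂.1.le (measure_ne_top μ _)).mpr hs₂.2) h12
  have ham : AEMeasurable (decRearr μ g) (volume.restrict (Ioo 0 M)) :=
    aemeasurable_restrict_of_antitoneOn measurableSet_Ioo hanti
  haveI h₁ : IsFiniteMeasure (Measure.map g μ) := by
    constructor
    rw [Measure.map_apply hgm MeasurableSet.univ]
    exact measure_lt_top μ _
  apply Measure.ext_of_Iic
  intro a
  have hdM : (μ {x | a < g x}).toReal ≤ M :=
    ENNReal.toReal_mono (measure_ne_top μ _) (measure_mono (subset_univ _))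
  rw [Measure.map_apply hgm measurableSet_Iic,
    Measure.map_apply_of_aemeasurable ham measurableSet_Iic]
  have hL : g ⁻¹' Iic a = {x | a < g x}ᶜ := by ext x; simp [not_lt]
  rw [hL, measure_compl (measurableSet_lt measurable_const hgm) (measure_ne_top μ _),
    Measure.restrict_apply' measurableSet_Ioo]
  have hiff := Set.ext_iff.mp (levelset hgm hgi a)
  have hpre : decRearr μ g ⁻¹' Iic a ∩ Ioo 0 M =
      Ioo 0 M \ Ioo 0 (μ {x | a < g x}).toReal := by
    ext s
    have hs := hiff s
    simp only [mem_setOf_eq, mem_Ioo] at hs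
    simp only [mem_inter_iff, mem_preimage, mem_Iic, mem_diff, mem_Ioo]
    constructor
    · rintro ⟨h1, h2⟩
      exact ⟨h2, fun hr => absurd (hs.mpr hr).2 h1.not_gt⟩
    · rintro ⟨h2, h1⟩
      refine ⟨?_, h2⟩
      by_contra h
      push_neg at h
      exact h1 (hs.mp ⟨h2, h⟩)
  rw [hpre, measure_diff (Ioo_subset_Ioo_right hdM) measurableSet_Ioo.nullMeasurableSet
    (by rw [Real.volume_Ioo]; exact ENNReal.ofReal_ne_top),
    Real.volume_Ioo, Real.volume_Ioo, sub_zero, sub_zero,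
    ENNReal.ofReal_toReal (measure_ne_top μ _), ENNReal.ofReal_toReal (measure_ne_top μ _)]

end StarAux

open StarAux

/-- On a finite nonatomic measure space, the star function equals the integral of the
decreasing rearrangement: `sup {∫_E f dμ : μ(E) = t} = ∫₀ᵗ f*(s) ds`. -/
theorem star_function_eq_integral_decRearr {X : Type*} [MeasurableSpace X] (μ : Measure X)
    [IsFiniteMeasure μ] (hna : IsNonatomic μ) (f : X → ℝ) (hf : Integrable f μ) :
    ∀ t : ℝ, 0 ≤ t → t ≤ (μ univ).toReal →
      sSup {I : ℝ | ∃ E : Set X, MeasurableSet E ∧ μ E = ENNReal.ofReal t ∧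
          I = ∫ x in E, f x ∂μ} =
        ∫ s in (0 : ℝ)..t, decRearr μ f s := by
  intro t ht htM
  -- Replace `f` by a measurable representative `g`.
  obtain ⟨g, hgsm, hfg⟩ : ∃ g, StronglyMeasurable g ∧ f =ᵐ[μ] g :=
    ⟨hf.1.mk f, hf.1.stronglyMeasurable_mk, hf.1.ae_eq_mk⟩
  have hgm : Measurable g := hgsm.measurable
  have hgi : Integrable g μ := hf.congr hfg
  have hdc : ∀ c : ℝ, μ {x | c < f x} = μ {x | c < g x} := by
    intro c
    apply measure_congr
    filter_upwards [hfg] with x hx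
    change (c < f x) = (c < g x)
    rw [hx]
  have hdec : decRearr μ f = decRearr μ g := by
    funext s
    unfold decRearr
    congr 1
    ext c
    simp only [mem_setOf_eq]
    rw [hdc c]
  have hsetI : ∀ E : Set X, (∫ x in E, f x ∂μ) = ∫ x in E, g x ∂μ :=
    fun E => integral_congr_ae (ae_restrict_of_ae hfg)
  have hset : {I : ℝ | ∃ E : Set X, MeasurableSet E ∧ μ E = ENNReal.ofReal t ∧
        I = ∫ x in E, f x ∂μ}
      = {I : ℝ | ∃ E : Set X, MeasurableSet E ∧ μ E = ENNReal.ofReal t ∧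
        I = ∫ x in E, g x ∂μ} := by
    ext I
    constructor
    · rintro ⟨E, h1, h2, h3⟩; exact ⟨E, h1, h2, h3.trans (hsetI E)⟩
    · rintro ⟨E, h1, h2, h3⟩; exact ⟨E, h1, h2, h3.trans (hsetI E).symm⟩
  rw [hdec, hset]
  clear hdc hdec hset hsetI hfg hf hgsm
  set M := (μ univ).toReal with hM
  rcases ht.eq_or_lt with h0 | h0
  · -- `t = 0`
    have hzero : {I : ℝ | ∃ E : Set X, MeasurableSet E ∧ μ E = ENNReal.ofReal t ∧
        I = ∫ x in E, g x ∂μ} = {0} := by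
      ext I
      simp only [mem_setOf_eq, mem_singleton_iff]
      constructor
      · rintro ⟨E, hE, hE0, rfl⟩
        rw [← h0, ENNReal.ofReal_zero] at hE0
        rw [Measure.restrict_eq_zero.mpr hE0]
        exact integral_zero_measure _
      · rintro rfl
        refine ⟨∅, MeasurableSet.empty, by simp [← h0], ?_⟩
        rw [Measure.restrict_eq_zero.mpr measure_empty]
        exact (integral_zero_measure _).symm
    rw [hzero, csSup_singleton, ← h0, intervalIntegral.integral_same]
  -- now `0 < t`
  have hamν : AEMeasurable (decRearr μ g) (volume.restrict (Ioo 0 M)) := by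
    apply aemeasurable_restrict_of_antitoneOn measurableSet_Ioo
    intro s₁ hs₁ s₂ hs₂ h12
    exact decRearr_anti hgm hgi hs₁.1
      ((ENNReal.ofReal_lt_iff_lt_toReal hs₂.1.le (measure_ne_top μ _)).mpr hs₂.2) h12
  have hmap := map_eq hgm hgi
  rcases htM.lt_or_eq with htM' | htM'
  · -- `0 < t < M`
    have hoflt : ENNReal.ofReal t < μ univ :=
      (ENNReal.ofReal_lt_iff_lt_toReal ht (measure_ne_top μ _)).mpr htM'
    set c := decRearr μ g t with hc
    have h1 : μ {x | c < g x} ≤ ENNReal.ofReal t := d_decRearr_le hgm hgi h0 le_rfl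
    have h2 : ENNReal.ofReal t ≤ μ {x | c ≤ g x} := by
      apply le_level_measure hgm
      intro b hb
      exact (ofReal_lt_d hoflt hb).le
    have hmeas_lt : MeasurableSet {x | c < g x} := measurableSet_lt measurable_const hgm
    have hmeas_le : MeasurableSet {x | c ≤ g x} := measurableSet_le measurable_const hgm
    have hmeq : {x | g x = c} = {x | c ≤ g x} \ {x | c < g x} := by
      ext x
      simp only [mem_setOf_eq, mem_diff, not_lt]
      constructor
      · intro h; exact ⟨h.ge, h.le⟩
      · intro h; exact le_antisymm h.2 h.1
    have hmeasc : MeasurableSet {x | g x = c} := hmeq ▸ hmeas_le.diff hmeas_lt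
    have hmuc : ENNReal.ofReal t - μ {x | c < g x} ≤ μ {x | g x = c} := by
      rw [hmeq, measure_diff (Set.setOf_subset_setOf.mpr fun x => le_of_lt)
        hmeas_lt.nullMeasurableSet (measure_ne_top μ _)]
      exact tsub_le_tsub_right h2 _
    obtain ⟨A, hAsub, hAm, hAμ⟩ := exists_subset_measure_eq hna hmeasc hmuc
    have hdisj : Disjoint {x | c < g x} A := by
      refine disjoint_left.mpr fun x hx hxA => ?_
      have hgc := hAsub hxA
      simp only [mem_setOf_eq] at hx hgc
      exact absurd hgc hx.ne'
    have hE₀μ : μ ({x | c < g x} ∪ A) = ENNReal.ofReal t := by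
      rw [measure_union hdisj hAm, hAμ, add_tsub_cancel_of_le h1]
    have hφc : Continuous fun y : ℝ => max (y - c) 0 :=
      (continuous_id.sub continuous_const).max continuous_const
    have hsubint : Integrable (fun x => g x - c) μ := hgi.sub (integrable_const c)
    have hφgi : Integrable (fun x => max (g x - c) 0) μ := hsubint.pos_part
    set V : ℝ := (∫ x, max (g x - c) 0 ∂μ) + c * t with hV
    -- the candidate set `E₀` realizes the value `V`
    have hIA : ∫ x in A, g x ∂μ = c * (μ A).toReal := by
      rw [setIntegral_congr_fun hAm fun x hx => hAsub hx, setIntegral_const, smul_eq_mul, measureReal_def,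
        mul_comm]
    have hIS : ∫ x in {x | c < g x}, g x ∂μ
        = (∫ x, max (g x - c) 0 ∂μ) + c * (μ {x | c < g x}).toReal := by
      have e1 : ∫ x in {x | c < g x}, g x ∂μ
          = ∫ x in {x | c < g x}, ((g x - c) + c) ∂μ := by simp
      rw [e1, integral_add (hsubint.integrableOn) (integrable_const c),
        setIntegral_const, smul_eq_mul, measureReal_def, mul_comm ((μ _).toReal) c]
      congr 1
      have e2 : ∫ x in {x | c < g x}, (g x - c) ∂μ
          = ∫ x in {x | c < g x}, max (g x - c) 0 ∂μ :=
        setIntegral_congr_fun hmeas_lt fun x hx =>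
          (max_eq_left (sub_nonneg.mpr (le_of_lt hx))).symm
      rw [e2]
      exact setIntegral_eq_integral_of_forall_compl_eq_zero fun x hx =>
        max_eq_right (sub_nonpos.mpr (not_lt.mp hx))
    have hIE : ∫ x in ({x | c < g x} ∪ A), g x ∂μ = V := by
      rw [setIntegral_union hdisj hAm hgi.integrableOn hgi.integrableOn, hIS, hIA]
      have htoReal : (μ {x | c < g x}).toReal + (μ A).toReal = t := by
        rw [← ENNReal.toReal_add (measure_ne_top μ _) (measure_ne_top μ _), hAμ,
          add_tsub_cancel_of_le h1, ENNReal.toReal_ofReal ht]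
      rw [hV]
      linear_combination c * htoReal
    -- upper bound
    have hub : ∀ I ∈ {I : ℝ | ∃ E : Set X, MeasurableSet E ∧ μ E = ENNReal.ofReal t ∧
        I = ∫ x in E, g x ∂μ}, I ≤ V := by
      rintro I ⟨E, hEm, hEμ, rfl⟩
      have hEt : (μ E).toReal = t := by rw [hEμ, ENNReal.toReal_ofReal ht]
      have e1 : ∫ x in E, g x ∂μ = (∫ x in E, (g x - c) ∂μ) + c * t := by
        have e0 : ∫ x in E, g x ∂μ = ∫ x in E, ((g x - c) + c) ∂μ := by simp
        rw [e0, integral_add (hsubint.integrableOn) (integrable_const c),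
          setIntegral_const, smul_eq_mul, measureReal_def, mul_comm ((μ E).toReal) c, hEt]
      have h2' : ∫ x in E, (g x - c) ∂μ ≤ ∫ x in E, max (g x - c) 0 ∂μ :=
        integral_mono (hsubint.integrableOn) hφgi.integrableOn
          fun x => le_max_left _ _
      have h3' : ∫ x in E, max (g x - c) 0 ∂μ ≤ ∫ x, max (g x - c) 0 ∂μ :=
        setIntegral_le_integral hφgi (Filter.Eventually.of_forall fun x => le_max_right _ _)
      rw [e1, hV]
      linarith
    have hsup : sSup {I : ℝ | ∃ E : Set X, MeasurableSet E ∧ μ E = ENNReal.ofReal t ∧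
        I = ∫ x in E, g x ∂μ} = V :=
      IsGreatest.csSup_eq ⟨⟨{x | c < g x} ∪ A, hmeas_lt.union hAm, hE₀μ, hIE.symm⟩, hub⟩
    -- identify the right-hand side
    have hintφmap : Integrable (fun y : ℝ => max (y - c) 0) (Measure.map g μ) :=
      (integrable_map_measure hφc.aestronglyMeasurable hgm.aemeasurable).mpr hφgi
    have hintφν : Integrable (fun s : ℝ => max (decRearr μ g s - c) 0)
        (volume.restrict (Ioo 0 M)) := by
      rw [hmap] at hintφmap
      exact (integrable_map_measure hφc.aestronglyMeasurable hamν).mp hintφmap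
    have heqint : (∫ s in Ioo (0 : ℝ) M, max (decRearr μ g s - c) 0)
        = ∫ x, max (g x - c) 0 ∂μ := by
      rw [← integral_map hamν hφc.aestronglyMeasurable, ← hmap,
        integral_map hgm.aemeasurable hφc.aestronglyMeasurable]
    have hIooInt : IntegrableOn (fun s : ℝ => max (decRearr μ g s - c) 0) (Ioo 0 M) volume :=
      hintφν
    have hsplit : (∫ s in Ioo (0 : ℝ) M, max (decRearr μ g s - c) 0)
        = ∫ s in Ioc (0 : ℝ) t, max (decRearr μ g s - c) 0 := by
      rw [← Ioc_union_Ioo_eq_Ioo ht htM',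
        setIntegral_union (Set.disjoint_left.mpr fun s hs hs' => absurd hs'.1 hs.2.not_gt)
          measurableSet_Ioo
          (hIooInt.mono_set (fun s hs => ⟨hs.1, lt_of_le_of_lt hs.2 htM'⟩))
          (hIooInt.mono_set (fun s hs => ⟨h0.trans hs.1, hs.2⟩))]
      have hzero2 : ∫ s in Ioo t M, max (decRearr μ g s - c) 0 = 0 := by
        apply setIntegral_eq_zero_of_forall_eq_zero
        intro s hs
        have : decRearr μ g s ≤ c :=
          decRearr_anti hgm hgi h0
            ((ENNReal.ofReal_lt_iff_lt_toReal (h0.trans hs.1).le (measure_ne_top μ _)).mpr hs.2)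
            hs.1.le
        exact max_eq_right (sub_nonpos.mpr this)
      rw [hzero2, add_zero]
    have hcongr : (∫ s in Ioc (0 : ℝ) t, max (decRearr μ g s - c) 0)
        = ∫ s in Ioc (0 : ℝ) t, (decRearr μ g s - c) :=
      setIntegral_congr_fun measurableSet_Ioc fun s hs =>
        max_eq_left (sub_nonneg.mpr (decRearr_anti hgm hgi hs.1 hoflt hs.2))
    have hint_t : IntegrableOn (fun s : ℝ => max (decRearr μ g s - c) 0) (Ioc 0 t) volume :=
      hIooInt.mono_set fun s hs => ⟨hs.1, lt_of_le_of_lt hs.2 htM'⟩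
    have hint_sub : IntegrableOn (fun s : ℝ => decRearr μ g s - c) (Ioc 0 t) volume := by
      apply hint_t.congr
      refine (ae_restrict_iff' measurableSet_Ioc).mpr (Filter.Eventually.of_forall fun s hs => ?_)
      exact max_eq_left (sub_nonneg.mpr (decRearr_anti hgm hgi hs.1 hoflt hs.2))
    have hIocInt : ∫ s in Ioc (0 : ℝ) t, decRearr μ g s
        = (∫ s in Ioc (0 : ℝ) t, (decRearr μ g s - c)) + c * t := by
      have e : ∫ s in Ioc (0 : ℝ) t, decRearr μ g s
          = ∫ s in Ioc (0 : ℝ) t, ((decRearr μ g s - c) + c) := by simp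
      rw [e, integral_add hint_sub (integrable_const c), setIntegral_const, smul_eq_mul, measureReal_def,
        Real.volume_Ioc, sub_zero, ENNReal.toReal_ofReal ht, mul_comm]
    rw [hsup, intervalIntegral.integral_of_le ht, hIocInt, ← hcongr, ← hsplit, heqint, hV]
  · -- `t = M`
    have hofM : ENNReal.ofReal t = μ univ := by
      rw [htM', hM, ENNReal.ofReal_toReal (measure_ne_top μ _)]
    have hset2 : {I : ℝ | ∃ E : Set X, MeasurableSet E ∧ μ E = ENNReal.ofReal t ∧
        I = ∫ x in E, g x ∂μ} = {∫ x, g x ∂μ} := by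
      ext I
      simp only [mem_setOf_eq, mem_singleton_iff]
      constructor
      · rintro ⟨E, hEm, hEμ, rfl⟩
        have hcompl : μ Eᶜ = 0 := by
          rw [measure_compl hEm (measure_ne_top μ _), hEμ, hofM, tsub_self]
        have hsum := integral_add_compl hEm hgi (f := g)
        have hz : ∫ x in Eᶜ, g x ∂μ = 0 := by
          rw [Measure.restrict_eq_zero.mpr hcompl]
          exact integral_zero_measure _
        linarith [hsum, hz]
      · rintro rfl
        exact ⟨univ, MeasurableSet.univ, by rw [hofM], setIntegral_univ.symm⟩
    rw [hset2, csSup_singleton, intervalIntegral.integral_of_le ht, integral_Ioc_eq_integral_Ioo,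
      htM']
    have hfin : ∫ s in Ioo (0 : ℝ) M, decRearr μ g s = ∫ x, g x ∂μ := by
      have h1 : ∫ s in Ioo (0 : ℝ) M, decRearr μ g s
          = ∫ y, y ∂(Measure.map (decRearr μ g) (volume.restrict (Ioo 0 M))) :=
        (integral_map hamν measurable_id.aestronglyMeasurable).symm
      rw [h1, ← hmap]
      exact integral_map hgm.aemeasurable measurable_id.aestronglyMeasurable
    rw [hfin]
end
end

section
/- Let (X, μ) be a finite measure space and u, v ∈ L¹(X, μ). Suppose that for every real t with 0 ≤ t ≤ μ(X), ∫₀ᵗ u*(s) ds ≤ ∫₀ᵗ v*(s) ds, where u*, v* are the decreasing rearrangements of u and v. Then for every convex nondecreasing function φ : ℝ → ℝ such that φ∘u and φ∘v are integrable, ∫_X φ(u) dμ ≤ ∫_X φ(v) dμ. -/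
open MeasureTheory Set Filter Topology
open scoped ENNReal

set_option linter.unusedSectionVars false
set_option linter.unusedVariables false
set_option linter.unusedTactic false

noncomputable section

section Rearr

variable {X : Type*} [MeasurableSpace X] {μ : Measure X} [IsFiniteMeasure μ] {f : X → ℝ}

lemma exists_dist_le (hf : Measurable f) {b : ℝ≥0∞} (hb : 0 < b) :
    ∃ c : ℝ, μ {x | c < f x} ≤ b := by
  have hanti : Antitone (fun n : ℕ => {x | (n : ℝ) < f x}) := fun m n hmn x hx =>
    show (m:ℝ) < f x from lt_of_le_of_lt (Nat.cast_le.mpr hmn) hx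
  have h1 : Tendsto (fun n : ℕ => μ {x | (n : ℝ) < f x}) atTop (𝓝 (μ (⋂ n : ℕ, {x | (n : ℝ) < f x}))) :=
    tendsto_measure_iInter_atTop (fun n => (hf measurableSet_Ioi).nullMeasurableSet)
      hanti ⟨0, measure_ne_top μ _⟩
  have h2 : (⋂ n : ℕ, {x | (n : ℝ) < f x}) = ∅ := by
    ext x
    simp only [mem_iInter, mem_setOf_eq, mem_empty_iff_false, iff_false, not_forall, not_lt]
    obtain ⟨n, hn⟩ := exists_nat_ge (f x)
    exact ⟨n, hn⟩
  rw [h2, measure_empty] at h1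
  obtain ⟨n, hn⟩ := (h1.eventually_lt_const hb).exists
  exact ⟨n, hn.le⟩

lemma bddBelow_distSet {b : ℝ≥0∞} (hb : b < μ univ) :
    BddBelow {c : ℝ | μ {x | c < f x} ≤ b} := by
  by_contra h
  have key : ∀ c : ℝ, μ {x | c < f x} ≤ b := by
    intro c
    obtain ⟨c', hc', hcc'⟩ := not_bddBelow_iff.mp h c
    exact le_trans (measure_mono (fun x hx => lt_trans hcc' hx)) hc'
  have hmono : Monotone (fun n : ℕ => {x | (-(n:ℝ)) < f x}) := fun m n hmn x hx =>
    show -(n:ℝ) < f x from lt_of_le_of_lt (neg_le_neg (Nat.cast_le.mpr hmn)) hx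
  have h1 : Tendsto (fun n : ℕ => μ {x | (-(n:ℝ)) < f x}) atTop (𝓝 (μ (⋃ n : ℕ, {x | (-(n:ℝ)) < f x}))) :=
    tendsto_measure_iUnion_atTop hmono
  have h2 : (⋃ n : ℕ, {x | (-(n:ℝ)) < f x}) = univ := by
    ext x
    simp only [mem_iUnion, mem_setOf_eq, mem_univ, iff_true]
    obtain ⟨n, hn⟩ := exists_nat_ge (-f x)
    exact ⟨n + 1, show -((n+1:ℕ):ℝ) < f x by push_cast; linarith⟩
  rw [h2] at h1
  have h3 : μ univ ≤ b := le_of_tendsto h1 (Filter.Eventually.of_forall fun n => key _)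
  exact absurd (h3.trans_lt hb) (lt_irrefl _)

/-- The infimum in the definition of `decRearr` is attained. -/
lemma dist_decRearr_le (hf : Measurable f) {s : ℝ} (hs : 0 < s)
    (hsM : ENNReal.ofReal s < μ univ) :
    μ {x | decRearr μ f s < f x} ≤ ENNReal.ofReal s := by
  set S := {c : ℝ | μ {x | c < f x} ≤ ENNReal.ofReal s} with hS
  have hSne : S.Nonempty := exists_dist_le hf (by simpa using hs)
  have hSbdd : BddBelow S := bddBelow_distSet hsM
  set c₀ := sInf S with hc₀
  have hunion : {x | c₀ < f x} = ⋃ n : ℕ, {x | c₀ + 1/(n+1) < f x} := by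
    ext x
    simp only [mem_setOf_eq, mem_iUnion]
    constructor
    · intro hx
      obtain ⟨n, hn⟩ := exists_nat_one_div_lt (show 0 < f x - c₀ by linarith)
      exact ⟨n, by push_cast at hn ⊢; linarith⟩
    · rintro ⟨n, hn⟩
      have : (0:ℝ) < 1/(n+1) := by positivity
      linarith
    
  have hmono : Monotone (fun n : ℕ => {x | c₀ + 1/((n:ℝ)+1) < f x}) := by
    intro m n hmn x hx
    refine show c₀ + 1/((n:ℝ)+1) < f x from lt_of_le_of_lt ?_ hx
    have h1 : (m:ℝ) + 1 ≤ (n:ℝ) + 1 := by exact_mod_cast Nat.succ_le_succ hmn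
    have h2 : (0:ℝ) < (m:ℝ)+1 := by positivity
    gcongr
  have h1 : Tendsto (fun n : ℕ => μ {x | c₀ + 1/((n:ℝ)+1) < f x}) atTop
      (𝓝 (μ (⋃ n : ℕ, {x | c₀ + 1/((n:ℝ)+1) < f x}))) := tendsto_measure_iUnion_atTop hmono
  rw [← hunion] at h1
  refine le_of_tendsto h1 (Filter.Eventually.of_forall fun n => ?_)
  obtain ⟨b, hbS, hbc⟩ := (Real.lt_sInf_add_pos hSne (show (0:ℝ) < 1/((n:ℝ)+1) by positivity))
  refine le_trans (measure_mono fun x hx => ?_) hbS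
  exact lt_of_le_of_lt hbc.le hx

/-- Key equivalence: `c < f*(s) ↔ s < d_f(c)`. -/
lemma lt_decRearr_iff (hf : Measurable f) {s : ℝ} (hs : 0 < s)
    (hsM : ENNReal.ofReal s < μ univ) (c : ℝ) :
    c < decRearr μ f s ↔ ENNReal.ofReal s < μ {x | c < f x} := by
  set S := {c : ℝ | μ {x | c < f x} ≤ ENNReal.ofReal s} with hS
  have hSne : S.Nonempty := exists_dist_le hf (by simpa using hs)
  have hSbdd : BddBelow S := bddBelow_distSet hsM
  constructor
  · intro h
    by_contra hcon
    push_neg at hcon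
    exact absurd (csInf_le hSbdd hcon) (not_le.mpr h)
  · intro h
    have hmem : decRearr μ f s ∈ S := dist_decRearr_le hf hs hsM
    have hlb : ∀ b ∈ S, c ≤ b := by
      intro b hb
      by_contra hbc
      push_neg at hbc
      exact absurd (le_trans (measure_mono fun x hx => lt_trans hbc hx) hb) (not_le.mpr h)
    have h1 : c ≤ decRearr μ f s := le_csInf hSne hlb
    rcases h1.lt_or_eq with h2 | h2
    · exact h2
    · exact absurd (h2 ▸ hmem) (fun hc => absurd hc (not_le.mpr h))

/-- Distribution sets of the decreasing rearrangement. -/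
lemma decRearr_superlevel (hf : Measurable f) (c : ℝ) :
    {s ∈ Ioo (0:ℝ) (μ univ).toReal | c < decRearr μ f s}
      = Ioo 0 (μ {x | c < f x}).toReal := by
  have hfin : μ univ ≠ ⊤ := measure_ne_top μ _
  ext s
  simp only [mem_sep_iff, mem_Ioo]
  constructor
  · rintro ⟨⟨hs0, hsM⟩, hc⟩
    have hsM' : ENNReal.ofReal s < μ univ := by
      rw [ENNReal.ofReal_lt_iff_lt_toReal hs0.le hfin] at *
      exact hsM
    refine ⟨hs0, ?_⟩
    have := (lt_decRearr_iff hf hs0 hsM' c).mp hc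
    exact (ENNReal.ofReal_lt_iff_lt_toReal hs0.le (measure_ne_top μ _)).mp this
  · rintro ⟨hs0, hsd⟩
    have hdle : (μ {x | c < f x}).toReal ≤ (μ univ).toReal :=
      ENNReal.toReal_mono hfin (measure_mono (subset_univ _))
    have hsM : s < (μ univ).toReal := lt_of_lt_of_le hsd hdle
    have hsM' : ENNReal.ofReal s < μ univ :=
      (ENNReal.ofReal_lt_iff_lt_toReal hs0.le hfin).mpr hsM
    refine ⟨⟨hs0, hsM⟩, ?_⟩
    rw [lt_decRearr_iff hf hs0 hsM' c]
    exact (ENNReal.ofReal_lt_iff_lt_toReal hs0.le (measure_ne_top μ _)).mpr hsd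

lemma decRearr_antitoneOn (hf : Measurable f) :
    AntitoneOn (decRearr μ f) (Ioo (0:ℝ) (μ univ).toReal) := by
  intro s hs s' hs' hss'
  have hfin : μ univ ≠ ⊤ := measure_ne_top μ _
  have hs'M : ENNReal.ofReal s' < μ univ :=
    (ENNReal.ofReal_lt_iff_lt_toReal hs'.1.le hfin).mpr hs'.2
  refine csInf_le_csInf (bddBelow_distSet hs'M) (exists_dist_le hf (by simpa using hs.1)) ?_
  intro c hc
  exact le_trans hc (ENNReal.ofReal_le_ofReal hss')

lemma aemeasurable_decRearr (hf : Measurable f) :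
    AEMeasurable (decRearr μ f) (volume.restrict (Ioo (0:ℝ) (μ univ).toReal)) :=
  aemeasurable_restrict_of_antitoneOn measurableSet_Ioo (decRearr_antitoneOn hf)

/-- Layer cake: positive parts of `f - t` and `f* - t` have the same lintegral. -/
lemma lintegral_pospart_decRearr (hf : Measurable f) (t : ℝ) :
    ∫⁻ s in Ioo (0:ℝ) (μ univ).toReal, ENNReal.ofReal (max (decRearr μ f s - t) 0)
      = ∫⁻ x, ENNReal.ofReal (max (f x - t) 0) ∂μ := by
  have hfin : μ univ ≠ ⊤ := measure_ne_top μ _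
  have hmeasR : AEMeasurable (fun x => max (f x - t) 0) μ :=
    ((hf.sub measurable_const).max measurable_const).aemeasurable
  have hmeasL : AEMeasurable (fun s => max (decRearr μ f s - t) 0)
      (volume.restrict (Ioo (0:ℝ) (μ univ).toReal)) :=
    ((aemeasurable_decRearr hf).sub aemeasurable_const).max aemeasurable_const
  have hR := lintegral_eq_lintegral_meas_lt (f := fun x => max (f x - t) 0) μ
    (Filter.Eventually.of_forall fun x => le_max_right _ _) hmeasR
  have hL := lintegral_eq_lintegral_meas_lt (f := fun s => max (decRearr μ f s - t) 0)
    (volume.restrict (Ioo (0:ℝ) (μ univ).toReal))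
    (Filter.Eventually.of_forall fun s => le_max_right _ _) hmeasL
  rw [hR, hL]
  refine lintegral_congr_ae ?_
  filter_upwards [ae_restrict_mem measurableSet_Ioi] with r hr
  have hr0 : (0:ℝ) < r := hr
  have hset1 : {s : ℝ | r < max (decRearr μ f s - t) 0} = {s | t + r < decRearr μ f s} := by
    ext s
    simp only [mem_setOf_eq, lt_max_iff]
    constructor
    · rintro (h | h) <;> [linarith; linarith]
    · intro h; left; linarith
  have hset2 : {x | r < max (f x - t) 0} = {x | t + r < f x} := by
    ext x
    simp only [mem_setOf_eq, lt_max_iff]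
    constructor
    · rintro (h | h) <;> [linarith; linarith]
    · intro h; left; linarith
  rw [hset1, hset2, Measure.restrict_apply' measurableSet_Ioo]
  have : {s | t + r < decRearr μ f s} ∩ Ioo (0:ℝ) (μ univ).toReal
      = {s ∈ Ioo (0:ℝ) (μ univ).toReal | t + r < decRearr μ f s} := by
    ext s; simp only [mem_inter_iff, mem_setOf_eq, mem_sep_iff]; tauto
  rw [this, decRearr_superlevel hf (t + r), Real.volume_Ioo, sub_zero,
    ENNReal.ofReal_toReal (measure_ne_top μ _)]

/-- Layer cake inequality for negative parts. -/
lemma lintegral_negpart_decRearr_le (hf : Measurable f) :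
    ∫⁻ s in Ioo (0:ℝ) (μ univ).toReal, ENNReal.ofReal (max (- decRearr μ f s) 0)
      ≤ ∫⁻ x, ENNReal.ofReal (max (- f x) 0) ∂μ := by
  have hfin : μ univ ≠ ⊤ := measure_ne_top μ _
  have hmeasR : AEMeasurable (fun x => max (- f x) 0) μ :=
    (hf.neg.max measurable_const).aemeasurable
  have hmeasL : AEMeasurable (fun s => max (- decRearr μ f s) 0)
      (volume.restrict (Ioo (0:ℝ) (μ univ).toReal)) :=
    (aemeasurable_decRearr hf).neg.max aemeasurable_const
  have hR := lintegral_eq_lintegral_meas_le (f := fun x => max (- f x) 0) μ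
    (Filter.Eventually.of_forall fun x => le_max_right _ _) hmeasR
  have hL := lintegral_eq_lintegral_meas_lt (f := fun s => max (- decRearr μ f s) 0)
    (volume.restrict (Ioo (0:ℝ) (μ univ).toReal))
    (Filter.Eventually.of_forall fun s => le_max_right _ _) hmeasL
  rw [hR, hL]
  refine lintegral_mono_ae ?_
  filter_upwards [ae_restrict_mem measurableSet_Ioi] with r hr
  have hr0 : (0:ℝ) < r := hr
  have hset1 : {s : ℝ | r < max (- decRearr μ f s) 0} = {s | decRearr μ f s < -r} := by
    ext s
    simp only [mem_setOf_eq, lt_max_iff]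
    constructor
    · rintro (h | h) <;> [linarith; linarith]
    · intro h; left; linarith
  have hset2 : {x | r ≤ max (- f x) 0} = {x | f x ≤ -r} := by
    ext x
    simp only [mem_setOf_eq, le_max_iff]
    constructor
    · rintro (h | h) <;> [linarith; linarith]
    · intro h; left; linarith
  rw [hset1, hset2, Measure.restrict_apply' measurableSet_Ioo]
  set a := (μ {x | -r < f x}).toReal with ha
  have ha0 : 0 ≤ a := ENNReal.toReal_nonneg
  have haM : a ≤ (μ univ).toReal := ENNReal.toReal_mono hfin (measure_mono (subset_univ _))
  have hsub : {s : ℝ | decRearr μ f s < -r} ∩ Ioo (0:ℝ) (μ univ).toReal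
      ⊆ Ico a (μ univ).toReal := by
    intro s hs
    have hsIoo := hs.2
    have hnot : s ∉ Ioo 0 a := by
      intro hcon
      have : s ∈ {s ∈ Ioo (0:ℝ) (μ univ).toReal | -r < decRearr μ f s} := by
        rw [decRearr_superlevel hf (-r)]
        exact hcon
      have h2 := this.2
      have h3 := hs.1
      simp only [mem_setOf_eq] at h3
      linarith
    simp only [mem_Ioo, not_and, not_lt] at hnot
    exact ⟨hnot hsIoo.1, hsIoo.2⟩
  calc volume ({s : ℝ | decRearr μ f s < -r} ∩ Ioo (0:ℝ) (μ univ).toReal)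
      ≤ volume (Ico a (μ univ).toReal) := measure_mono hsub
    _ = ENNReal.ofReal ((μ univ).toReal - a) := Real.volume_Ico
    _ = ENNReal.ofReal (μ univ).toReal - ENNReal.ofReal a := ENNReal.ofReal_sub _ ha0
    _ = μ univ - μ {x | -r < f x} := by
        rw [ENNReal.ofReal_toReal hfin, ha, ENNReal.ofReal_toReal (measure_ne_top μ _)]
    _ = μ {x | f x ≤ -r} := by
        have hms : MeasurableSet {x | -r < f x} := measurableSet_lt measurable_const hf
        rw [← measure_compl hms (measure_ne_top μ _)]
        congr 1
        ext x
        simp only [mem_compl_iff, mem_setOf_eq, not_lt]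

lemma integrable_pospart_decRearr (hint : Integrable f μ) (hf : Measurable f) (t : ℝ) :
    Integrable (fun s => max (decRearr μ f s - t) 0)
      (volume.restrict (Ioo (0:ℝ) (μ univ).toReal)) := by
  constructor
  · exact (((aemeasurable_decRearr hf).sub aemeasurable_const).max
      aemeasurable_const).aestronglyMeasurable
  · refine (hasFiniteIntegral_iff_ofReal
      (Filter.Eventually.of_forall fun s => le_max_right (decRearr μ f s - t) 0)).mpr ?_
    rw [lintegral_pospart_decRearr hf t]
    calc ∫⁻ x, ENNReal.ofReal (max (f x - t) 0) ∂μ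
        ≤ ∫⁻ x, ((‖f x‖₊ : ℝ≥0∞) + ENNReal.ofReal |t|) ∂μ := by
          refine lintegral_mono fun x => ?_
          rw [← enorm_eq_nnnorm, Real.enorm_eq_ofReal_abs, ← ENNReal.ofReal_add (abs_nonneg _) (abs_nonneg _)]
          refine ENNReal.ofReal_le_ofReal ?_
          refine max_le ?_ (by positivity)
          have := abs_sub (f x) t
          have h2 := le_abs_self (f x - t)
          linarith
      _ = (∫⁻ x, (‖f x‖₊ : ℝ≥0∞) ∂μ) + ENNReal.ofReal |t| * μ univ := by
          rw [lintegral_add_right _ measurable_const, lintegral_const]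
      _ < ⊤ := ENNReal.add_lt_top.mpr ⟨hint.2, ENNReal.mul_lt_top ENNReal.ofReal_lt_top
          (measure_lt_top μ _)⟩

lemma integrable_decRearr (hint : Integrable f μ) (hf : Measurable f) :
    Integrable (decRearr μ f) (volume.restrict (Ioo (0:ℝ) (μ univ).toReal)) := by
  constructor
  · exact (aemeasurable_decRearr hf).aestronglyMeasurable
  · have habs : ∀ a : ℝ, |a| = max a 0 + max (-a) 0 := by
      intro a
      rcases le_total 0 a with h | h
      · rw [abs_of_nonneg h, max_eq_left h, max_eq_right (by linarith), add_zero]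
      · rw [abs_of_nonpos h, max_eq_right h, max_eq_left (by linarith), zero_add]
    rw [hasFiniteIntegral_iff_norm]
    calc ∫⁻ s in Ioo (0:ℝ) (μ univ).toReal, ENNReal.ofReal ‖decRearr μ f s‖
        = ∫⁻ s in Ioo (0:ℝ) (μ univ).toReal,
            (ENNReal.ofReal (max (decRearr μ f s) 0) + ENNReal.ofReal (max (- decRearr μ f s) 0)) := by
          refine lintegral_congr fun s => ?_
          rw [Real.norm_eq_abs, habs,
            ENNReal.ofReal_add (le_max_right _ _) (le_max_right _ _)]
      _ = (∫⁻ s in Ioo (0:ℝ) (μ univ).toReal, ENNReal.ofReal (max (decRearr μ f s) 0))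
          + ∫⁻ s in Ioo (0:ℝ) (μ univ).toReal, ENNReal.ofReal (max (- decRearr μ f s) 0) := by
          refine lintegral_add_left' ?_ _
          exact ((aemeasurable_decRearr hf).max aemeasurable_const).ennreal_ofReal
      _ ≤ (∫⁻ x, ENNReal.ofReal (max (f x) 0) ∂μ) + ∫⁻ x, ENNReal.ofReal (max (- f x) 0) ∂μ := by
          have h1 := lintegral_pospart_decRearr (μ := μ) hf 0
          simp only [sub_zero] at h1
          exact add_le_add h1.le (lintegral_negpart_decRearr_le hf)
      _ < ⊤ := by
          have hb : ∀ g : X → ℝ, (∀ x, max (g x) 0 ≤ |f x|) →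
              ∫⁻ x, ENNReal.ofReal (max (g x) 0) ∂μ < ⊤ := by
            intro g hg
            refine lt_of_le_of_lt (lintegral_mono fun x => ?_) hint.2.lt_top
            rw [Real.enorm_eq_ofReal_abs]
            exact ENNReal.ofReal_le_ofReal (hg x)
          refine ENNReal.add_lt_top.mpr ⟨hb f (fun x => max_le (le_abs_self _) (abs_nonneg _)), 
            hb (fun x => - f x) (fun x => max_le (by rw [abs_eq_max_neg]; exact le_max_right _ _)
              (abs_nonneg _))⟩

lemma setIntegral_pospart_decRearr (hint : Integrable f μ) (hf : Measurable f) (t : ℝ) :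
    ∫ s in Ioo (0:ℝ) (μ univ).toReal, max (decRearr μ f s - t) 0 = ∫ x, max (f x - t) 0 ∂μ := by
  have hL := integral_eq_lintegral_of_nonneg_ae (μ := volume.restrict (Ioo (0:ℝ) (μ univ).toReal))
    (f := fun s => max (decRearr μ f s - t) 0)
    (Filter.Eventually.of_forall fun s => le_max_right (decRearr μ f s - t) 0)
    (integrable_pospart_decRearr hint hf t).1
  have hR := integral_eq_lintegral_of_nonneg_ae (μ := μ) (f := fun x => max (f x - t) 0)
    (Filter.Eventually.of_forall fun x => le_max_right (f x - t) 0)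
    (((hf.sub measurable_const).max measurable_const).aestronglyMeasurable)
  rw [hL, hR, lintegral_pospart_decRearr hf t]

variable {u v : X → ℝ}

/-- Hardy's argument: domination of partial integrals of rearrangements gives domination
of the integrals of positive parts. -/
lemma pospart_integral_mono (hu : Integrable u μ) (hum : Measurable u)
    (hv : Integrable v μ) (hvm : Measurable v)
    (hstar : ∀ t : ℝ, 0 ≤ t → t ≤ (μ univ).toReal →
      (∫ s in (0 : ℝ)..t, decRearr μ u s) ≤ ∫ s in (0 : ℝ)..t, decRearr μ v s)
    (t : ℝ) : ∫ x, max (u x - t) 0 ∂μ ≤ ∫ x, max (v x - t) 0 ∂μ := by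
  have hfin : μ univ ≠ ⊤ := measure_ne_top μ _
  set M := (μ univ).toReal with hM
  set τ := (μ {x | t < u x}).toReal with hτ
  have hτ0 : 0 ≤ τ := ENNReal.toReal_nonneg
  have hτM : τ ≤ M := ENNReal.toReal_mono hfin (measure_mono (subset_univ _))
  have IuM : IntegrableOn (decRearr μ u) (Ioo (0:ℝ) M) volume := integrable_decRearr hu hum
  have IvM : IntegrableOn (decRearr μ v) (Ioo (0:ℝ) M) volume := integrable_decRearr hv hvm
  have Iuτ : IntegrableOn (decRearr μ u) (Ioo (0:ℝ) τ) volume :=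
    IuM.mono_set (Ioo_subset_Ioo_right hτM)
  have Ivτ : IntegrableOn (decRearr μ v) (Ioo (0:ℝ) τ) volume :=
    IvM.mono_set (Ioo_subset_Ioo_right hτM)
  have IvmaxM : IntegrableOn (fun s => max (decRearr μ v s - t) 0) (Ioo (0:ℝ) M) volume :=
    integrable_pospart_decRearr hv hvm t
  have Ivmaxτ : IntegrableOn (fun s => max (decRearr μ v s - t) 0) (Ioo (0:ℝ) τ) volume :=
    IvmaxM.mono_set (Ioo_subset_Ioo_right hτM)
  have hne : ∀ᵐ s ∂volume.restrict (Ioo (0:ℝ) M), s ≠ τ := by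
    rw [ae_iff]
    have hset : {a : ℝ | ¬ a ≠ τ} = {τ} := by ext a; simp
    rw [hset, Measure.restrict_apply' measurableSet_Ioo]
    exact measure_mono_null inter_subset_left Real.volume_singleton
  have hcong : ∀ᵐ s ∂volume.restrict (Ioo (0:ℝ) M),
      max (decRearr μ u s - t) 0 = (Ioo (0:ℝ) τ).indicator (fun s => decRearr μ u s - t) s := by
    filter_upwards [ae_restrict_mem measurableSet_Ioo, hne] with s hs hsne
    have hsM' : ENNReal.ofReal s < μ univ :=
      (ENNReal.ofReal_lt_iff_lt_toReal hs.1.le hfin).mpr hs.2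
    rcases lt_or_gt_of_ne hsne with hlt | hgt
    · have hIn : s ∈ Ioo (0:ℝ) τ := ⟨hs.1, hlt⟩
      rw [indicator_of_mem hIn]
      have ht : t < decRearr μ u s := by
        refine (lt_decRearr_iff hum hs.1 hsM' t).mpr ?_
        exact (ENNReal.ofReal_lt_iff_lt_toReal hs.1.le (measure_ne_top μ _)).mpr hlt
      exact max_eq_left (by linarith)
    · rw [indicator_of_notMem (fun hIn => absurd hIn.2 (not_lt.mpr hgt.le))]
      have hle : decRearr μ u s ≤ t := by
        by_contra hcon
        push_neg at hcon
        have h1 := (lt_decRearr_iff hum hs.1 hsM' t).mp hcon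
        have h2 := (ENNReal.ofReal_lt_iff_lt_toReal hs.1.le (measure_ne_top μ _)).mp h1
        rw [← hτ] at h2
        linarith
      exact max_eq_right (by linarith)
  calc ∫ x, max (u x - t) 0 ∂μ
      = ∫ s in Ioo (0:ℝ) M, max (decRearr μ u s - t) 0 :=
        (setIntegral_pospart_decRearr hu hum t).symm
    _ = ∫ s in Ioo (0:ℝ) M, (Ioo (0:ℝ) τ).indicator (fun s => decRearr μ u s - t) s :=
        integral_congr_ae hcong
    _ = ∫ s in Ioo (0:ℝ) τ, (decRearr μ u s - t) := by
        rw [integral_indicator measurableSet_Ioo, Measure.restrict_restrict measurableSet_Ioo,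
          inter_eq_left.mpr (Ioo_subset_Ioo_right hτM)]
    _ = (∫ s in Ioo (0:ℝ) τ, decRearr μ u s) - t * τ := by
        rw [integral_sub Iuτ (integrable_const _), setIntegral_const, measureReal_def, Real.volume_Ioo,
          sub_zero, ENNReal.toReal_ofReal hτ0, smul_eq_mul, mul_comm]
    _ ≤ (∫ s in Ioo (0:ℝ) τ, decRearr μ v s) - t * τ := by
        have h := hstar τ hτ0 hτM
        rw [intervalIntegral.integral_of_le hτ0, intervalIntegral.integral_of_le hτ0,
          integral_Ioc_eq_integral_Ioo, integral_Ioc_eq_integral_Ioo] at h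
        linarith
    _ = ∫ s in Ioo (0:ℝ) τ, (decRearr μ v s - t) := by
        rw [integral_sub Ivτ (integrable_const _), setIntegral_const, measureReal_def, Real.volume_Ioo,
          sub_zero, ENNReal.toReal_ofReal hτ0, smul_eq_mul, mul_comm]
    _ ≤ ∫ s in Ioo (0:ℝ) τ, max (decRearr μ v s - t) 0 :=
        integral_mono (Ivτ.sub (integrable_const _)) Ivmaxτ
          (fun s => le_max_left (decRearr μ v s - t) 0)
    _ ≤ ∫ s in Ioo (0:ℝ) M, max (decRearr μ v s - t) 0 :=
        setIntegral_mono_set IvmaxM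
          (Filter.Eventually.of_forall fun s => le_max_right (decRearr μ v s - t) 0)
          ((Ioo_subset_Ioo_right hτM).eventuallyLE)
    _ = ∫ x, max (v x - t) 0 ∂μ := setIntegral_pospart_decRearr hv hvm t

end Rearr

section Convex

/-- Right slope (right derivative surrogate) of a convex function. -/
def rightSlope (φ : ℝ → ℝ) (q : ℝ) : ℝ :=
  sInf ((fun y => (φ y - φ q) / (y - q)) '' Ioi q)

/-- Supporting (tangent) line of `φ` at `q`. -/
def tangentLine (φ : ℝ → ℝ) (q : ℝ) (x : ℝ) : ℝ := φ q + rightSlope φ q * (x - q)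

variable {φ : ℝ → ℝ}

lemma slopeSet_nonempty (q : ℝ) :
    ((fun y => (φ y - φ q) / (y - q)) '' Ioi q).Nonempty :=
  ⟨_, ⟨q + 1, by simp, rfl⟩⟩

lemma slopeSet_bddBelow (hφ : ConvexOn ℝ univ φ) (q : ℝ) :
    BddBelow ((fun y => (φ y - φ q) / (y - q)) '' Ioi q) := by
  refine ⟨(φ q - φ (q - 1)) / (q - (q - 1)), ?_⟩
  rintro _ ⟨y, hy, rfl⟩
  exact hφ.slope_mono_adjacent (mem_univ (q - 1)) (mem_univ y) (by linarith) hy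

lemma rightSlope_nonneg (hφ : ConvexOn ℝ univ φ) (hm : Monotone φ) (q : ℝ) :
    0 ≤ rightSlope φ q := by
  refine le_csInf (slopeSet_nonempty q) ?_
  rintro _ ⟨y, hy, rfl⟩
  have hy' : q < y := hy
  exact div_nonneg (sub_nonneg.mpr (hm hy'.le)) (sub_nonneg.mpr hy'.le)

lemma rightSlope_le_slope (hφ : ConvexOn ℝ univ φ) {q y : ℝ} (hy : q < y) :
    rightSlope φ q ≤ (φ y - φ q) / (y - q) :=
  csInf_le (slopeSet_bddBelow hφ q) ⟨y, hy, rfl⟩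

lemma slope_le_rightSlope (hφ : ConvexOn ℝ univ φ) {x q : ℝ} (hx : x < q) :
    (φ q - φ x) / (q - x) ≤ rightSlope φ q := by
  refine le_csInf (slopeSet_nonempty q) ?_
  rintro _ ⟨y, hy, rfl⟩
  exact hφ.slope_mono_adjacent (mem_univ x) (mem_univ y) hx hy

lemma tangentLine_le (hφ : ConvexOn ℝ univ φ) (q : ℝ) : ∀ x, tangentLine φ q x ≤ φ x := by
  intro x
  rcases lt_trichotomy x q with hx | hx | hx
  · have h1 := slope_le_rightSlope hφ hx
    have h2 : (φ q - φ x) / (q - x) * (q - x) = φ q - φ x :=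
      div_mul_cancel₀ _ (ne_of_gt (sub_pos.mpr hx))
    have h3 := mul_le_mul_of_nonneg_right h1 (sub_pos.mpr hx).le
    rw [h2] at h3
    unfold tangentLine
    nlinarith
  · subst hx; simp [tangentLine]
  · have h1 := rightSlope_le_slope hφ hx
    have h2 : (φ x - φ q) / (x - q) * (x - q) = φ x - φ q :=
      div_mul_cancel₀ _ (ne_of_gt (sub_pos.mpr hx))
    have h3 := mul_le_mul_of_nonneg_right h1 (sub_pos.mpr hx).le
    rw [h2] at h3
    unfold tangentLine
    nlinarith

lemma rightSlope_mono (hφ : ConvexOn ℝ univ φ) : Monotone (rightSlope φ) := by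
  intro p q hpq
  rcases eq_or_lt_of_le hpq with h | h
  · subst h; exact le_rfl
  · refine le_trans (rightSlope_le_slope hφ h) ?_
    refine le_csInf (slopeSet_nonempty q) ?_
    rintro _ ⟨y, hy, rfl⟩
    exact hφ.slope_mono_adjacent (mem_univ p) (mem_univ y) h hy

/-- Two supporting lines with equal slopes coincide. -/
lemma tangentLine_eq_of_slope_eq (hφ : ConvexOn ℝ univ φ) {p q : ℝ} (hpq : p < q)
    (hr : rightSlope φ p = rightSlope φ q) : tangentLine φ q = tangentLine φ p := by
  have h1 := tangentLine_le hφ q p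
  have h2 := tangentLine_le hφ p q
  unfold tangentLine at h1 h2 ⊢
  rw [hr] at h2
  have hpq' : φ q = φ p + rightSlope φ q * (q - p) := by nlinarith
  funext x
  rw [hr, hpq']
  ring

end Convex

section MainConvex

variable {X : Type*} [MeasurableSpace X] {μ : Measure X} [IsFiniteMeasure μ] {u v : X → ℝ}

/-- If the positive parts dominate at every level, the integrals are ordered. -/
lemma integral_mono_of_pospart (hu : Integrable u μ) (hv : Integrable v μ)
    (hI2 : ∀ t : ℝ, ∫ x, max (u x - t) 0 ∂μ ≤ ∫ x, max (v x - t) 0 ∂μ) :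
    ∫ x, u x ∂μ ≤ ∫ x, v x ∂μ := by
  have key : ∀ n : ℕ, ∫ x, u x ∂μ ≤ (∫ x, v x ∂μ) + ∫ x, max (- v x - n) 0 ∂μ := by
    intro n
    have hun : Integrable (fun x => u x + n) μ := hu.add (integrable_const _)
    have hvn : Integrable (fun x => v x + n) μ := hv.add (integrable_const _)
    have h1 : ∫ x, (u x + n) ∂μ ≤ ∫ x, max (u x + n) 0 ∂μ :=
      integral_mono hun hun.pos_part (fun x => le_max_left (u x + n) 0)
    have h2 : ∫ x, max (u x + n) 0 ∂μ ≤ ∫ x, max (v x + n) 0 ∂μ := by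
      have := hI2 (-n)
      simp only [sub_neg_eq_add] at this
      exact this
    have h3 : ∫ x, max (v x + n) 0 ∂μ
        = (∫ x, (v x + n) ∂μ) + ∫ x, max (- v x - n) 0 ∂μ := by
      have hpt : ∀ x, max (v x + n) 0 = (v x + n) + max (- v x - n) 0 := by
        intro x
        rcases le_total 0 (v x + n) with h | h
        · rw [max_eq_left h, max_eq_right (by linarith)]
          ring
        · rw [max_eq_right h, max_eq_left (by linarith)]
          ring
      calc ∫ x, max (v x + n) 0 ∂μ = ∫ x, ((v x + n) + max (- v x - n) 0) ∂μ :=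
            integral_congr_ae (Filter.Eventually.of_forall hpt)
        _ = _ := integral_add hvn (by
            have : Integrable (fun x => - v x - n) μ := (hv.neg.sub (integrable_const _))
            exact this.pos_part)
    have h4 : ∫ x, (u x + n) ∂μ = (∫ x, u x ∂μ) + (μ univ).toReal * n := by
      rw [integral_add hu (integrable_const _), integral_const, smul_eq_mul, measureReal_def]
    have h5 : ∫ x, (v x + n) ∂μ = (∫ x, v x ∂μ) + (μ univ).toReal * n := by
      rw [integral_add hv (integrable_const _), integral_const, smul_eq_mul, measureReal_def]
    rw [h4] at h1
    rw [h3, h5] at h2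
    linarith
  have hlim : Tendsto (fun n : ℕ => ∫ x, max (- v x - n) 0 ∂μ) atTop (𝓝 0) := by
    have h0 : Tendsto (fun n : ℕ => ∫ x, max (- v x - n) 0 ∂μ) atTop
        (𝓝 (∫ x, (0:ℝ) ∂μ)) := by
      refine tendsto_integral_of_dominated_convergence (fun x => |v x|)
        (fun n => ((hv.neg.sub (integrable_const _)).pos_part).1) hv.abs ?_ ?_
      · intro n
        refine Filter.Eventually.of_forall fun x => ?_
        rw [Real.norm_eq_abs, abs_of_nonneg (le_max_right _ _)]
        refine max_le ?_ (abs_nonneg _)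
        have h1 : (0:ℝ) ≤ n := Nat.cast_nonneg n
        have h2 := neg_abs_le (v x)
        have h3 := le_abs_self (v x)
        linarith
      · refine Filter.Eventually.of_forall fun x => ?_
        obtain ⟨N, hN⟩ := exists_nat_ge (- v x)
        refine tendsto_const_nhds.congr' ?_
        filter_upwards [Filter.eventually_ge_atTop N] with n hn
        have : (N:ℝ) ≤ n := Nat.cast_le.mpr hn
        exact (max_eq_right (by linarith)).symm
    simpa using h0
  have htv : Tendsto (fun n : ℕ => (∫ x, v x ∂μ) + ∫ x, max (- v x - n) 0 ∂μ) atTop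
      (𝓝 ((∫ x, v x ∂μ) + 0)) := tendsto_const_nhds.add hlim
  rw [add_zero] at htv
  exact ge_of_tendsto htv (Filter.Eventually.of_forall key)

end MainConvex

section Induction

variable {X : Type*} [MeasurableSpace X] {μ : Measure X} [IsFiniteMeasure μ] {u v : X → ℝ}
variable {φ : ℝ → ℝ}

lemma tangentLine_integrable (hu : Integrable u μ) (q : ℝ) :
    Integrable (fun x => tangentLine φ q (u x)) μ := by
  unfold tangentLine
  exact (integrable_const _).add ((hu.sub (integrable_const q)).const_mul _)

lemma tangentLine_integral_mono (hφ : ConvexOn ℝ univ φ) (hm : Monotone φ)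
    (hu : Integrable u μ) (hv : Integrable v μ)
    (hI1 : ∫ x, u x ∂μ ≤ ∫ x, v x ∂μ) (q : ℝ) :
    ∫ x, tangentLine φ q (u x) ∂μ ≤ ∫ x, tangentLine φ q (v x) ∂μ := by
  unfold tangentLine
  have h1u : Integrable (fun x => rightSlope φ q * (u x - q)) μ := by
    exact (hu.sub (integrable_const q)).const_mul _
  have h1v : Integrable (fun x => rightSlope φ q * (v x - q)) μ := by
    exact (hv.sub (integrable_const q)).const_mul _
  have h2u : ∫ x, (u x - q) ∂μ = (∫ x, u x ∂μ) - (μ univ).toReal * q := by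
    rw [integral_sub hu (integrable_const _), integral_const, smul_eq_mul, measureReal_def]
  have h2v : ∫ x, (v x - q) ∂μ = (∫ x, v x ∂μ) - (μ univ).toReal * q := by
    rw [integral_sub hv (integrable_const _), integral_const, smul_eq_mul, measureReal_def]
  rw [integral_add (integrable_const _) h1u, integral_add (integrable_const _) h1v,
    integral_const_mul, integral_const_mul, h2u, h2v]
  have h1 : (∫ x, u x ∂μ) - (μ univ).toReal * q ≤ (∫ x, v x ∂μ) - (μ univ).toReal * q := by
    linarith
  exact add_le_add_right (mul_le_mul_of_nonneg_left h1 (rightSlope_nonneg hφ hm q)) _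

/-- Induction over finite sets of tangent points. -/
lemma sup_tangent_key (hφ : ConvexOn ℝ univ φ) (hm : Monotone φ)
    (hu : Integrable u μ) (hv : Integrable v μ)
    (hI1 : ∫ x, u x ∂μ ≤ ∫ x, v x ∂μ)
    (hI2 : ∀ t : ℝ, ∫ x, max (u x - t) 0 ∂μ ≤ ∫ x, max (v x - t) 0 ∂μ) :
    ∀ n : ℕ, ∀ S : Finset ℝ, ∀ hS : S.Nonempty, S.card = n + 1 →
      Integrable (fun x => S.sup' hS (fun q => tangentLine φ q (u x))) μ ∧
      Integrable (fun x => S.sup' hS (fun q => tangentLine φ q (v x))) μ ∧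
      (∫ x, S.sup' hS (fun q => tangentLine φ q (u x)) ∂μ
        ≤ ∫ x, S.sup' hS (fun q => tangentLine φ q (v x)) ∂μ) ∧
      (∀ y, S.max' hS ≤ y →
        S.sup' hS (fun q => tangentLine φ q y) = tangentLine φ (S.max' hS) y) := by
  intro n
  induction n with
  | zero =>
    intro S hS hcard
    obtain ⟨q, rfl⟩ := Finset.card_eq_one.mp hcard
    simp only [Finset.sup'_singleton, Finset.max'_singleton]
    exact ⟨tangentLine_integrable hu q, tangentLine_integrable hv q,
      tangentLine_integral_mono hφ hm hu hv hI1 q, fun y _ => trivial⟩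
  | succ n ih =>
    intro S hS hcard
    set q := S.max' hS with hqdef
    have hq : q ∈ S := S.max'_mem hS
    set S' := S.erase q with hS'def
    have hcard' : S'.card = n + 1 := by
      rw [hS'def, Finset.card_erase_of_mem hq, hcard]
      omega
    have hS' : S'.Nonempty := Finset.card_pos.mp (by omega)
    set p := S'.max' hS' with hpdef
    have hpS : p ∈ S' := S'.max'_mem hS'
    have hpq : p < q := by
      have h1 : p ≤ q := S.le_max' p (Finset.mem_of_mem_erase hpS)
      have h2 : p ≠ q := Finset.ne_of_mem_erase hpS
      exact lt_of_le_of_ne h1 h2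
    obtain ⟨IHu, IHv, IHle, IHinv⟩ := ih S' hS' hcard'
    have hins : S = insert q S' := (Finset.insert_erase hq).symm
    have hsup : ∀ g : ℝ → ℝ, S.sup' hS g = g q ⊔ S'.sup' hS' g := by
      intro g
      rw [show S.sup' hS g = (insert q S').sup' (hins ▸ hS) g from by congr 1]
      exact Finset.sup'_insert hS' g
    rcases eq_or_lt_of_le (rightSlope_mono hφ hpq.le) with req | rlt
    · -- equal slopes: the new tangent line coincides with the old top line
      have heq : tangentLine φ q = tangentLine φ p := tangentLine_eq_of_slope_eq hφ hpq req
      have hEeq : ∀ y : ℝ, S.sup' hS (fun r => tangentLine φ r y)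
          = S'.sup' hS' (fun r => tangentLine φ r y) := by
        intro y
        rw [hsup]
        refine max_eq_right ?_
        rw [heq]
        exact Finset.le_sup' (fun r => tangentLine φ r y) hpS
      refine ⟨?_, ?_, ?_, ?_⟩
      · exact IHu.congr (Filter.Eventually.of_forall fun x => (hEeq (u x)).symm)
      · exact IHv.congr (Filter.Eventually.of_forall fun x => (hEeq (v x)).symm)
      · calc ∫ x, S.sup' hS (fun r => tangentLine φ r (u x)) ∂μ
            = ∫ x, S'.sup' hS' (fun r => tangentLine φ r (u x)) ∂μ :=
              integral_congr_ae (Filter.Eventually.of_forall fun x => hEeq (u x))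
          _ ≤ ∫ x, S'.sup' hS' (fun r => tangentLine φ r (v x)) ∂μ := IHle
          _ = ∫ x, S.sup' hS (fun r => tangentLine φ r (v x)) ∂μ :=
              (integral_congr_ae (Filter.Eventually.of_forall fun x => hEeq (v x))).symm
      · intro y hy
        rw [hEeq y, IHinv y (le_trans hpq.le hy), ← heq]
    · -- strictly larger slope: crossing point
      set d := rightSlope φ q - rightSlope φ p with hddef
      have hd : 0 < d := sub_pos.mpr rlt
      set c := ((φ p - rightSlope φ p * p) - (φ q - rightSlope φ q * q)) / d with hcdef
      have hc : d * c = (φ p - rightSlope φ p * p) - (φ q - rightSlope φ q * q) := by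
        rw [hcdef]
        field_simp
      have hB : ∀ x : ℝ, tangentLine φ q x = tangentLine φ p x + d * (x - c) := by
        intro x
        unfold tangentLine
        rw [hddef] at hc ⊢
        linear_combination hc
      have hpc : p ≤ c := by
        have h1 := tangentLine_le hφ q p
        rw [hB p] at h1
        have h2 : tangentLine φ p p = φ p := by simp [tangentLine]
        rw [h2] at h1
        nlinarith
      have hcq : c ≤ q := by
        have h1 := tangentLine_le hφ p q
        have h2 : tangentLine φ q q = φ q := by simp [tangentLine]
        have h3 := hB q
        rw [h2] at h3
        nlinarith
      have hmaxlem : ∀ x : ℝ, max (tangentLine φ p x) (tangentLine φ q x)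
          = tangentLine φ p x + d * max (x - c) 0 := by
        intro x
        rcases le_total x c with hx | hx
        · rw [max_eq_right (sub_nonpos.mpr hx), mul_zero, add_zero]
          refine max_eq_left ?_
          rw [hB x]
          nlinarith
        · rw [max_eq_left (sub_nonneg.mpr hx), ← hB x]
          exact max_eq_right (by rw [hB x]; nlinarith)
      have hpointwise : ∀ y : ℝ, S.sup' hS (fun r => tangentLine φ r y)
          = S'.sup' hS' (fun r => tangentLine φ r y) + d * max (y - c) 0 := by
        intro y
        rw [hsup]
        rcases le_total y c with hy | hy
        · rw [max_eq_right (sub_nonpos.mpr hy), mul_zero, add_zero]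
          refine max_eq_right ?_
          have h1 : tangentLine φ q y ≤ tangentLine φ p y := by
            rw [hB y]
            nlinarith
          exact le_trans h1 (Finset.le_sup' (fun r => tangentLine φ r y) hpS)
        · have hEp : S'.sup' hS' (fun r => tangentLine φ r y) = tangentLine φ p y :=
            IHinv y (le_trans hpc hy)
          rw [hEp, max_eq_left (sub_nonneg.mpr hy), ← hB y]
          exact max_eq_left (by rw [hB y]; nlinarith)
      have hposu : Integrable (fun x => d * max (u x - c) 0) μ := by
        exact ((hu.sub (integrable_const c)).pos_part).const_mul d
      have hposv : Integrable (fun x => d * max (v x - c) 0) μ := by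
        exact ((hv.sub (integrable_const c)).pos_part).const_mul d
      have hIu2 : Integrable (fun x => S'.sup' hS' (fun r => tangentLine φ r (u x))
          + d * max (u x - c) 0) μ := IHu.add hposu
      have hIv2 : Integrable (fun x => S'.sup' hS' (fun r => tangentLine φ r (v x))
          + d * max (v x - c) 0) μ := IHv.add hposv
      refine ⟨?_, ?_, ?_, ?_⟩
      · exact hIu2.congr (Filter.Eventually.of_forall fun x => (hpointwise (u x)).symm)
      · exact hIv2.congr (Filter.Eventually.of_forall fun x => (hpointwise (v x)).symm)
      · calc ∫ x, S.sup' hS (fun r => tangentLine φ r (u x)) ∂μ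
            = ∫ x, (S'.sup' hS' (fun r => tangentLine φ r (u x)) + d * max (u x - c) 0) ∂μ :=
              integral_congr_ae (Filter.Eventually.of_forall fun x => hpointwise (u x))
          _ = (∫ x, S'.sup' hS' (fun r => tangentLine φ r (u x)) ∂μ)
              + d * ∫ x, max (u x - c) 0 ∂μ := by
              rw [integral_add IHu hposu, integral_const_mul]
          _ ≤ (∫ x, S'.sup' hS' (fun r => tangentLine φ r (v x)) ∂μ)
              + d * ∫ x, max (v x - c) 0 ∂μ :=
              add_le_add IHle (mul_le_mul_of_nonneg_left (hI2 c) hd.le)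
          _ = ∫ x, (S'.sup' hS' (fun r => tangentLine φ r (v x)) + d * max (v x - c) 0) ∂μ := by
              rw [integral_add IHv hposv, integral_const_mul]
          _ = ∫ x, S.sup' hS (fun r => tangentLine φ r (v x)) ∂μ :=
              (integral_congr_ae (Filter.Eventually.of_forall fun x => hpointwise (v x))).symm
      · intro y hy
        have hcy : c ≤ y := le_trans hcq hy
        rw [hpointwise y, IHinv y (le_trans hpc hcy), max_eq_left (sub_nonneg.mpr hcy), ← hB y]

end Induction

section Grid

/-- Dyadic grid of tangent points. -/
def gridF (n : ℕ) : Finset ℝ :=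
  (Finset.range (2*n*2^n + 1)).image (fun j : ℕ => -(n:ℝ) + (j:ℝ)/2^n)

lemma gridF_nonempty (n : ℕ) : (gridF n).Nonempty :=
  Finset.Nonempty.image ⟨0, Finset.mem_range.mpr (Nat.succ_pos _)⟩ _

lemma gridF_subset (n : ℕ) : gridF n ⊆ gridF (n+1) := by
  intro x hx
  obtain ⟨j, hj, rfl⟩ := Finset.mem_image.mp hx
  rw [Finset.mem_range] at hj
  refine Finset.mem_image.mpr ⟨2^(n+1) + 2*j, Finset.mem_range.mpr ?_, ?_⟩
  · have h1 : (1:ℕ) ≤ 2^n := Nat.one_le_two_pow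
    have h2 : (2:ℕ)^(n+1) = 2*2^n := by ring
    nlinarith [hj, h1]
  · have h2 : ((2:ℝ))^(n+1) = 2*2^n := by ring
    have hpos : (0:ℝ) < 2^n := by positivity
    push_cast
    field_simp
    ring

variable {φ : ℝ → ℝ}

lemma tendsto_sup_tangent (hφ : ConvexOn ℝ univ φ) (hm : Monotone φ) (y : ℝ) :
    Tendsto (fun n => (gridF n).sup' (gridF_nonempty n) (fun q => tangentLine φ q y))
      atTop (𝓝 (φ y)) := by
  set B := φ (y+2) - φ y with hBdef
  have hB0 : 0 ≤ B := sub_nonneg.mpr (hm (by linarith))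
  have hupper : ∀ n : ℕ, (gridF n).sup' (gridF_nonempty n) (fun q => tangentLine φ q y) ≤ φ y :=
    fun n => Finset.sup'_le _ _ (fun q _ => tangentLine_le hφ q y)
  have hlower : ∀ᶠ n : ℕ in atTop,
      φ y - B * (1/2)^n ≤ (gridF n).sup' (gridF_nonempty n) (fun q => tangentLine φ q y) := by
    filter_upwards [Filter.eventually_ge_atTop (⌈|y|⌉₊ + 1)] with n hn
    have hyn : |y| + 1 ≤ (n:ℝ) := by
      have h1 : ((⌈|y|⌉₊ + 1 : ℕ) : ℝ) ≤ (n:ℝ) := Nat.cast_le.mpr hn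
      have h2 := Nat.le_ceil |y|
      push_cast at h1
      linarith
    have hy1 : y ≤ (n:ℝ) - 1 := by
      have := le_abs_self y
      linarith
    have hy2 : 0 ≤ y + n := by
      have := neg_abs_le y
      linarith
    have hpow : (0:ℝ) < 2^n := by positivity
    have hpow1 : (1:ℝ) ≤ 2^n := one_le_pow₀ (by norm_num)
    have hhalfeq : ((1:ℝ)/2)^n = 1/2^n := by rw [div_pow, one_pow]
    set j := ⌈(y + n) * 2^n⌉₊ with hjdef
    have hj1 : (y + n) * 2^n ≤ (j:ℝ) := Nat.le_ceil _
    have hj2 : (j:ℝ) < (y + n) * 2^n + 1 := Nat.ceil_lt_add_one (by positivity)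
    set q := -(n:ℝ) + (j:ℝ)/2^n with hqdef
    have hq1 : y ≤ q := by
      have h3 : y + (n:ℝ) ≤ (j:ℝ)/2^n := (le_div_iff₀ hpow).mpr hj1
      rw [hqdef]
      linarith
    have hq2 : q ≤ y + (1/2)^n := by
      have h3 : (j:ℝ) ≤ ((y + n) + 1/2^n) * 2^n := by
        rw [add_mul, div_mul_cancel₀ _ (ne_of_gt hpow)]
        linarith
      have h4 : (j:ℝ)/2^n ≤ (y + n) + 1/2^n := (div_le_iff₀ hpow).mpr h3
      rw [hqdef, hhalfeq]
      linarith
    have hqmem : q ∈ gridF n := by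
      refine Finset.mem_image.mpr ⟨j, Finset.mem_range.mpr ?_, hqdef.symm⟩
      have hcast : (j:ℝ) < ((2*n*2^n + 1 : ℕ) : ℝ) := by
        push_cast
        have h4 : (y + (n:ℝ)) * 2^n ≤ (2*(n:ℝ) - 1) * 2^n := by
          have h5 : y + (n:ℝ) ≤ 2*(n:ℝ) - 1 := by linarith
          exact mul_le_mul_of_nonneg_right h5 hpow.le
        nlinarith
      exact_mod_cast hcast
    clear_value j q
    have hr0 : 0 ≤ rightSlope φ q := rightSlope_nonneg hφ hm q
    have hrB : rightSlope φ q ≤ B := by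
      have h1 := rightSlope_le_slope hφ (show q < q + 1 by linarith)
      have h2 : (φ (q+1) - φ q) / ((q+1) - q) = φ (q+1) - φ q := by
        simp
      rw [h2] at h1
      have hhalf : ((1:ℝ)/2)^n ≤ 1 := by
        rw [hhalfeq]
        rw [div_le_one hpow]
        exact hpow1
      have h3 : φ (q+1) ≤ φ (y+2) := hm (by linarith)
      have h4 : φ y ≤ φ q := hm hq1
      rw [hBdef]
      linarith
    have htan : φ y - B * (1/2)^n ≤ tangentLine φ q y := by
      unfold tangentLine
      have h4 : φ y ≤ φ q := hm hq1
      have h5 : rightSlope φ q * (q - y) ≤ B * (1/2)^n := by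
        have h6 : 0 ≤ q - y := by linarith
        have h7 : q - y ≤ (1/2)^n := by linarith
        exact mul_le_mul hrB h7 h6 hB0
      nlinarith
    exact le_trans htan (Finset.le_sup' (fun q => tangentLine φ q y) hqmem)
  have hlow_tendsto : Tendsto (fun n : ℕ => φ y - B * (1/2)^n) atTop (𝓝 (φ y)) := by
    have h1 : Tendsto (fun n : ℕ => ((1:ℝ)/2)^n) atTop (𝓝 0) :=
      tendsto_pow_atTop_nhds_zero_of_lt_one (by norm_num) (by norm_num)
    have h2 : Tendsto (fun n : ℕ => φ y - B * (1/2)^n) atTop (𝓝 (φ y - B * 0)) :=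
      Tendsto.sub tendsto_const_nhds (h1.const_mul B)
    simpa using h2
  exact tendsto_of_tendsto_of_tendsto_of_le_of_le' hlow_tendsto tendsto_const_nhds
    hlower (Filter.Eventually.of_forall hupper)

end Grid

/-- **Majorization**: if `∫₀ᵗ u* ≤ ∫₀ᵗ v*` for all `t`, then the increasing convex means of
`u` are dominated by those of `v`. -/
theorem majorization_increasing_convex {X : Type*} [MeasurableSpace X] (μ : Measure X)
    [IsFiniteMeasure μ] (u v : X → ℝ) (hu : Integrable u μ) (hv : Integrable v μ)
    (hstar : ∀ t : ℝ, 0 ≤ t → t ≤ (μ univ).toReal →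
      (∫ s in (0 : ℝ)..t, decRearr μ u s) ≤ ∫ s in (0 : ℝ)..t, decRearr μ v s) :
    ∀ φ : ℝ → ℝ, ConvexOn ℝ univ φ → Monotone φ →
      Integrable (fun x => φ (u x)) μ → Integrable (fun x => φ (v x)) μ →
      (∫ x, φ (u x) ∂μ) ≤ ∫ x, φ (v x) ∂μ := by
  intro φ hφ hm hφu hφv
  -- replace `u`, `v` by measurable representatives
  set u' := hu.1.mk u with hu'def
  set v' := hv.1.mk v with hv'def
  have hu'ae : u =ᵐ[μ] u' := hu.1.ae_eq_mk
  have hv'ae : v =ᵐ[μ] v' := hv.1.ae_eq_mk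
  have hu'meas : Measurable u' := hu.1.stronglyMeasurable_mk.measurable
  have hv'meas : Measurable v' := hv.1.stronglyMeasurable_mk.measurable
  have hu'int : Integrable u' μ := hu.congr hu'ae
  have hv'int : Integrable v' μ := hv.congr hv'ae
  have hdr : ∀ (f g : X → ℝ), f =ᵐ[μ] g → decRearr μ f = decRearr μ g := by
    intro f g hfg
    funext s
    unfold decRearr
    congr 1
    ext c
    simp only [mem_setOf_eq]
    have hmeq : μ {x | c < f x} = μ {x | c < g x} := by
      apply measure_congr
      filter_upwards [hfg] with x hx
      show (c < f x) = (c < g x)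
      rw [hx]
    rw [hmeq]
  have hstar' : ∀ t : ℝ, 0 ≤ t → t ≤ (μ univ).toReal →
      (∫ s in (0 : ℝ)..t, decRearr μ u' s) ≤ ∫ s in (0 : ℝ)..t, decRearr μ v' s := by
    intro t h1 h2
    rw [← hdr u u' hu'ae, ← hdr v v' hv'ae]
    exact hstar t h1 h2
  have hφu' : Integrable (fun x => φ (u' x)) μ :=
    hφu.congr (hu'ae.mono fun x hx => by simp only [hx])
  have hφv' : Integrable (fun x => φ (v' x)) μ :=
    hφv.congr (hv'ae.mono fun x hx => by simp only [hx])
  have hIeq_u : ∫ x, φ (u x) ∂μ = ∫ x, φ (u' x) ∂μ :=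
    integral_congr_ae (hu'ae.mono fun x hx => by simp only [hx])
  have hIeq_v : ∫ x, φ (v x) ∂μ = ∫ x, φ (v' x) ∂μ :=
    integral_congr_ae (hv'ae.mono fun x hx => by simp only [hx])
  rw [hIeq_u, hIeq_v]
  -- the two basic comparison facts
  have hI2 : ∀ t : ℝ, ∫ x, max (u' x - t) 0 ∂μ ≤ ∫ x, max (v' x - t) 0 ∂μ :=
    fun t => pospart_integral_mono hu'int hu'meas hv'int hv'meas hstar' t
  have hI1 : ∫ x, u' x ∂μ ≤ ∫ x, v' x ∂μ := integral_mono_of_pospart hu'int hv'int hI2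
  -- the approximating sequence
  have key : ∀ n : ℕ,
      Integrable (fun x => (gridF n).sup' (gridF_nonempty n)
        (fun q => tangentLine φ q (u' x))) μ ∧
      Integrable (fun x => (gridF n).sup' (gridF_nonempty n)
        (fun q => tangentLine φ q (v' x))) μ ∧
      (∫ x, (gridF n).sup' (gridF_nonempty n) (fun q => tangentLine φ q (u' x)) ∂μ
        ≤ ∫ x, (gridF n).sup' (gridF_nonempty n) (fun q => tangentLine φ q (v' x)) ∂μ) := by
    intro n
    obtain ⟨m, hmcard⟩ : ∃ m, (gridF n).card = m + 1 := by
      have h1 := Finset.card_pos.mpr (gridF_nonempty n)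
      exact ⟨(gridF n).card - 1, by omega⟩
    obtain ⟨a, b, c, -⟩ :=
      sup_tangent_key hφ hm hu'int hv'int hI1 hI2 m (gridF n) (gridF_nonempty n) hmcard
    exact ⟨a, b, c⟩
  -- monotone convergence on both sides
  have hU : Tendsto (fun n => ∫ x, (gridF n).sup' (gridF_nonempty n)
      (fun q => tangentLine φ q (u' x)) ∂μ) atTop (𝓝 (∫ x, φ (u' x) ∂μ)) := by
    refine integral_tendsto_of_tendsto_of_monotone (fun n => (key n).1) hφu' ?_ ?_
    · refine Filter.Eventually.of_forall fun x => monotone_nat_of_le_succ fun n =>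
        Finset.sup'_mono _ (gridF_subset n) (gridF_nonempty n)
    · exact Filter.Eventually.of_forall fun x => tendsto_sup_tangent hφ hm (u' x)
  have hV : Tendsto (fun n => ∫ x, (gridF n).sup' (gridF_nonempty n)
      (fun q => tangentLine φ q (v' x)) ∂μ) atTop (𝓝 (∫ x, φ (v' x) ∂μ)) := by
    refine integral_tendsto_of_tendsto_of_monotone (fun n => (key n).2.1) hφv' ?_ ?_
    · refine Filter.Eventually.of_forall fun x => monotone_nat_of_le_succ fun n =>
        Finset.sup'_mono _ (gridF_subset n) (gridF_nonempty n)
    · exact Filter.Eventually.of_forall fun x => tendsto_sup_tangent hφ hm (v' x)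
  exact le_of_tendsto_of_tendsto' hU hV (fun n => (key n).2.2)
end
end

section
/- Let (X, μ) be a finite measure space and u, v ∈ L¹(X, μ) with u ≥ 0 and v ≥ 0 almost everywhere. Suppose that for every real t with 0 ≤ t ≤ μ(X), ∫₀ᵗ u*(s) ds ≤ ∫₀ᵗ v*(s) ds, where u*, v* are the decreasing rearrangements of u and v. Then for every p with 1 ≤ p ≤ ∞, the L^p(X, μ)-norm of u is at most the L^p(X, μ)-norm of v. -/
open MeasureTheory Set
open scoped ENNReal NNReal

noncomputable section

namespace MajAux

variable {X : Type*} [MeasurableSpace X] {μ : Measure X} [IsFiniteMeasure μ] {f : X → ℝ}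

lemma decRearr_congr {u u' : X → ℝ} (h : u =ᵐ[μ] u') : decRearr μ u = decRearr μ u' := by
  funext s
  unfold decRearr
  have hc : ∀ c : ℝ, μ {x | c < u x} = μ {x | c < u' x} := by
    intro c
    apply measure_congr
    filter_upwards [h] with x hx
    show (c < u x) = (c < u' x)
    rw [hx]
  simp_rw [hc]

lemma lb_of_mem (hnn : ∀ x, 0 ≤ f x) {s c : ℝ} (hs0 : 0 < s) (hsM : s < (μ univ).toReal)
    (hc : μ {x | c < f x} ≤ ENNReal.ofReal s) : 0 ≤ c := by
  by_contra hcn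
  push_neg at hcn
  have huniv : {x | c < f x} = univ := eq_univ_of_forall fun x => lt_of_lt_of_le hcn (hnn x)
  rw [huniv] at hc
  have hlt : ENNReal.ofReal s < μ univ := by
    have h2 := (ENNReal.ofReal_lt_ofReal_iff_of_nonneg hs0.le).mpr hsM
    rwa [ENNReal.ofReal_toReal (measure_ne_top μ univ)] at h2
  exact absurd hc (not_le.mpr hlt)

lemma bddBelow_aux (hnn : ∀ x, 0 ≤ f x) {s : ℝ} (hs0 : 0 < s) (hsM : s < (μ univ).toReal) :
    BddBelow {c : ℝ | μ {x | c < f x} ≤ ENNReal.ofReal s} :=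
  ⟨0, fun _ hc => lb_of_mem hnn hs0 hsM hc⟩

lemma nonempty_aux (hm : Measurable f) {s : ℝ} (hs0 : 0 < s) :
    {c : ℝ | μ {x | c < f x} ≤ ENNReal.ofReal s}.Nonempty := by
  have hA : Antitone (fun n : ℕ => {x | (n : ℝ) < f x}) := by
    intro n m hnm x hx
    simp only [mem_setOf_eq] at hx ⊢
    exact lt_of_le_of_lt (show (n : ℝ) ≤ m from Nat.cast_le.mpr hnm) hx
  have hI : ⋂ n : ℕ, {x | (n : ℝ) < f x} = ∅ := by
    ext x
    simp only [mem_iInter, mem_setOf_eq, mem_empty_iff_false, iff_false, not_forall, not_lt]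
    obtain ⟨n, hn⟩ := exists_nat_gt (f x)
    exact ⟨n, hn.le⟩
  have ht := tendsto_measure_iInter_atTop
    (fun n => (measurableSet_lt measurable_const hm).nullMeasurableSet) hA
    ⟨0, measure_ne_top μ _⟩
  rw [hI, measure_empty] at ht
  have hev : ∀ᶠ n : ℕ in Filter.atTop, (μ ∘ fun n : ℕ => {x | (n : ℝ) < f x}) n
      < ENNReal.ofReal s := ht.eventually (gt_mem_nhds (ENNReal.ofReal_pos.mpr hs0))
  obtain ⟨n, hn⟩ := hev.exists
  exact ⟨n, le_of_lt hn⟩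

lemma decRearr_le_iff (hm : Measurable f) (hnn : ∀ x, 0 ≤ f x) {s : ℝ} (hs0 : 0 < s)
    (hsM : s < (μ univ).toReal) {c : ℝ} :
    decRearr μ f s ≤ c ↔ μ {x | c < f x} ≤ ENNReal.ofReal s := by
  constructor
  · intro h
    have hrc : μ {x | c < f x} = ⨆ n : ℕ, μ {x | c + 1 / (n + 1) < f x} := by
      rw [← Monotone.measure_iUnion]
      · congr 1
        ext x
        simp only [mem_iUnion, mem_setOf_eq]
        constructor
        · intro hx
          obtain ⟨n, hn⟩ := exists_nat_one_div_lt (sub_pos.mpr hx)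
          exact ⟨n, by push_cast at hn ⊢; linarith⟩
        · rintro ⟨n, hn⟩
          have hpos : (0 : ℝ) < 1 / (n + 1) := by positivity
          linarith
      · intro n m hnm x hx
        simp only [mem_setOf_eq] at hx ⊢
        have h1 : (1 : ℝ) / (m + 1) ≤ 1 / (n + 1) := by
          apply one_div_le_one_div_of_le
          · positivity
          · have : (n : ℝ) ≤ m := Nat.cast_le.mpr hnm
            linarith
        linarith
    rw [hrc]
    refine iSup_le fun n => ?_
    have hpos : (0 : ℝ) < 1 / (n + 1) := by positivity
    obtain ⟨c', hc', hlt⟩ := exists_lt_of_csInf_lt (nonempty_aux hm hs0)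
      (lt_of_le_of_lt h (lt_add_of_pos_right c hpos))
    exact le_trans (measure_mono fun x hx => lt_trans hlt hx) hc'
  · intro h
    exact csInf_le (bddBelow_aux hnn hs0 hsM) h

lemma decRearr_nonneg (hm : Measurable f) (hnn : ∀ x, 0 ≤ f x) {s : ℝ} (hs0 : 0 < s)
    (hsM : s < (μ univ).toReal) : 0 ≤ decRearr μ f s :=
  le_csInf (nonempty_aux hm hs0) (fun _ hc => lb_of_mem hnn hs0 hsM hc)

lemma decRearr_antitoneOn (hm : Measurable f) (hnn : ∀ x, 0 ≤ f x) :
    AntitoneOn (decRearr μ f) (Ioo 0 (μ univ).toReal) := by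
  intro s hs t ht hst
  exact csInf_le_csInf (bddBelow_aux hnn ht.1 ht.2) (nonempty_aux hm hs.1)
    (fun c hc => le_trans hc (ENNReal.ofReal_le_ofReal hst))

lemma lt_decRearr_iff (hm : Measurable f) (hnn : ∀ x, 0 ≤ f x) {s : ℝ}
    (hs : s ∈ Ioo 0 (μ univ).toReal) {c : ℝ} :
    c < decRearr μ f s ↔ s < (μ {x | c < f x}).toReal := by
  rw [← not_le, decRearr_le_iff hm hnn hs.1 hs.2, not_le,
    ENNReal.ofReal_lt_iff_lt_toReal hs.1.le (measure_ne_top μ _)]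

lemma volume_decRearr_gt (hm : Measurable f) (hnn : ∀ x, 0 ≤ f x) (c : ℝ) :
    volume ({s | c < decRearr μ f s} ∩ Ioo 0 (μ univ).toReal) = μ {x | c < f x} := by
  have hDM : (μ {x | c < f x}).toReal ≤ (μ univ).toReal :=
    ENNReal.toReal_mono (measure_ne_top μ _) (measure_mono (subset_univ _))
  have hset : {s | c < decRearr μ f s} ∩ Ioo 0 (μ univ).toReal
      = Ioo 0 (μ {x | c < f x}).toReal := by
    ext s
    simp only [mem_inter_iff, mem_setOf_eq, mem_Ioo]
    constructor
    · rintro ⟨h1, h2, h3⟩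
      exact ⟨h2, (lt_decRearr_iff hm hnn ⟨h2, h3⟩).mp h1⟩
    · rintro ⟨h2, h3⟩
      have h3' : s < (μ univ).toReal := lt_of_lt_of_le h3 hDM
      exact ⟨(lt_decRearr_iff hm hnn ⟨h2, h3'⟩).mpr h3, h2, h3'⟩
  rw [hset, Real.volume_Ioo, sub_zero, ENNReal.ofReal_toReal (measure_ne_top μ _)]

lemma decRearr_aemeasurable (hm : Measurable f) (hnn : ∀ x, 0 ≤ f x) :
    AEMeasurable (decRearr μ f) (volume.restrict (Ioo 0 (μ univ).toReal)) :=
  aemeasurable_restrict_of_antitoneOn measurableSet_Ioo (decRearr_antitoneOn hm hnn)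

lemma decRearr_nonneg_ae (hm : Measurable f) (hnn : ∀ x, 0 ≤ f x) :
    0 ≤ᵐ[volume.restrict (Ioo 0 (μ univ).toReal)] decRearr μ f :=
  (ae_restrict_iff' measurableSet_Ioo).2
    (Filter.Eventually.of_forall fun s hs => decRearr_nonneg hm hnn hs.1 hs.2)

lemma lintegral_rpow_decRearr (hm : Measurable f) (hnn : ∀ x, 0 ≤ f x) {q : ℝ} (hq : 0 < q) :
    ∫⁻ s in Ioo 0 (μ univ).toReal, ENNReal.ofReal (decRearr μ f s ^ q)
      = ∫⁻ x, ENNReal.ofReal (f x ^ q) ∂μ := by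
  rw [lintegral_rpow_eq_lintegral_meas_lt_mul _ (decRearr_nonneg_ae hm hnn)
      (decRearr_aemeasurable hm hnn) hq,
    lintegral_rpow_eq_lintegral_meas_lt_mul μ (Filter.Eventually.of_forall hnn)
      hm.aemeasurable hq]
  congr 1
  refine setLIntegral_congr_fun measurableSet_Ioi (fun t _ => ?_)
  rw [Measure.restrict_apply' measurableSet_Ioo, volume_decRearr_gt hm hnn t]

lemma decRearr_integrable (hm : Measurable f) (hi : Integrable f μ) (hnn : ∀ x, 0 ≤ f x) :
    Integrable (decRearr μ f) (volume.restrict (Ioo 0 (μ univ).toReal)) := by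
  refine ⟨(decRearr_aemeasurable hm hnn).aestronglyMeasurable, ?_⟩
  have h2 := lintegral_rpow_decRearr hm hnn (μ := μ) (q := 1) one_pos
  simp only [Real.rpow_one] at h2
  have h1 : ∫⁻ s in Ioo 0 (μ univ).toReal, ‖decRearr μ f s‖ₑ
      = ∫⁻ s in Ioo 0 (μ univ).toReal, ENNReal.ofReal (decRearr μ f s) := by
    apply lintegral_congr_ae
    filter_upwards [decRearr_nonneg_ae hm hnn] with s hs
    rw [Real.enorm_eq_ofReal hs]
  have h3 : ∫⁻ x, ENNReal.ofReal (f x) ∂μ = ∫⁻ x, ‖f x‖ₑ ∂μ :=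
    lintegral_congr fun x => (Real.enorm_eq_ofReal (hnn x)).symm
  rw [HasFiniteIntegral, h1, h2, h3]
  exact hi.2

lemma ofReal_max_zero (x : ℝ) : ENNReal.ofReal (max x 0) = ENNReal.ofReal x := by
  rcases le_total x 0 with h | h
  · rw [max_eq_right h, ENNReal.ofReal_zero, ENNReal.ofReal_of_nonpos h]
  · rw [max_eq_left h]

section TwoFun

variable {X : Type*} [MeasurableSpace X] {μ : Measure X} [IsFiniteMeasure μ] {u v : X → ℝ}

lemma Phi_mono (hum : Measurable u) (hvm : Measurable v) (hui : Integrable u μ)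
    (hvi : Integrable v μ) (hun : ∀ x, 0 ≤ u x) (hvn : ∀ x, 0 ≤ v x)
    (hstar : ∀ t : ℝ, 0 ≤ t → t ≤ (μ univ).toReal →
      (∫ s in (0 : ℝ)..t, decRearr μ u s) ≤ ∫ s in (0 : ℝ)..t, decRearr μ v s)
    {c : ℝ} (hc : 0 ≤ c) :
    ∫⁻ s in Ioo 0 (μ univ).toReal, ENNReal.ofReal (decRearr μ u s - c)
      ≤ ∫⁻ s in Ioo 0 (μ univ).toReal, ENNReal.ofReal (decRearr μ v s - c) := by
  set M := (μ univ).toReal with hMdef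
  set a := (μ {x | c < u x}).toReal with hadef
  have ha0 : 0 ≤ a := ENNReal.toReal_nonneg
  have haM : a ≤ M := ENNReal.toReal_mono (measure_ne_top μ _) (measure_mono (subset_univ _))
  have hsub : Ioo (0:ℝ) a ⊆ Ioo 0 M := Ioo_subset_Ioo le_rfl haM
  -- integrability of the rearrangements minus a constant on Ioo 0 a
  have hIu : Integrable (decRearr μ u) (volume.restrict (Ioo 0 a)) :=
    (decRearr_integrable hum hui hun).mono_measure (Measure.restrict_mono hsub le_rfl)
  have hIv : Integrable (decRearr μ v) (volume.restrict (Ioo 0 a)) :=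
    (decRearr_integrable hvm hvi hvn).mono_measure (Measure.restrict_mono hsub le_rfl)
  have hconst : Integrable (fun _ : ℝ => c) (volume.restrict (Ioo 0 a)) := by
    refine (integrableOn_const_iff (C := c)).mpr (Or.inr ?_)
    rw [Real.volume_Ioo]
    exact ENNReal.ofReal_lt_top
  -- Step 1: restrict the integral of (u* - c)₊ to Ioo 0 a
  have step1 : ∫⁻ s in Ioo 0 M, ENNReal.ofReal (decRearr μ u s - c)
      = ∫⁻ s in Ioo 0 a, ENNReal.ofReal (decRearr μ u s - c) := by
    have hpt : ∀ s ∈ Ioo (0:ℝ) M, ENNReal.ofReal (decRearr μ u s - c)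
        = (Ioo (0:ℝ) a).indicator (fun s => ENNReal.ofReal (decRearr μ u s - c)) s := by
      intro s hs
      by_cases hsa : s < a
      · rw [indicator_of_mem (mem_Ioo.mpr ⟨hs.1, hsa⟩)]
      · rw [indicator_of_notMem (fun hmem => hsa hmem.2)]
        have : ¬ c < decRearr μ u s := by
          rw [lt_decRearr_iff hum hun hs]
          exact hsa
        rw [ENNReal.ofReal_of_nonpos (by linarith [not_lt.mp this])]
    rw [setLIntegral_congr_fun measurableSet_Ioo hpt,
      lintegral_indicator measurableSet_Ioo, Measure.restrict_restrict measurableSet_Ioo,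
      inter_eq_left.mpr hsub]
  -- Step 2: on Ioo 0 a, u* - c is nonnegative
  have hnn_ua : 0 ≤ᵐ[volume.restrict (Ioo 0 a)] fun s => decRearr μ u s - c := by
    refine (ae_restrict_iff' measurableSet_Ioo).2 (Filter.Eventually.of_forall fun s hs => ?_)
    have : c < decRearr μ u s := by
      rw [lt_decRearr_iff hum hun (mem_Ioo.mpr ⟨hs.1, lt_of_lt_of_le hs.2 haM⟩)]
      exact hs.2
    simp only [Pi.zero_apply]
    linarith
  have step2 : ∫⁻ s in Ioo 0 a, ENNReal.ofReal (decRearr μ u s - c)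
      = ENNReal.ofReal (∫ s in Ioo 0 a, (decRearr μ u s - c)) :=
    (ofReal_integral_eq_lintegral_ofReal (hIu.sub hconst) hnn_ua).symm
  -- Step 3: compute the integral over Ioo 0 a as interval integral
  have hIocIoo : ∀ w : ℝ → ℝ, (∫ s in Ioo 0 a, w s) = ∫ s in (0:ℝ)..a, w s := by
    intro w
    rw [intervalIntegral.integral_of_le ha0, integral_Ioc_eq_integral_Ioo]
  have hconv : ∀ w : ℝ → ℝ, Integrable w (volume.restrict (Ioo 0 a)) →
      (∫ s in Ioo 0 a, (w s - c)) = (∫ s in (0:ℝ)..a, w s) - a * c := by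
    intro w hw
    rw [integral_sub hw hconst, integral_const, measureReal_restrict_apply_univ,
      Real.volume_real_Ioo_of_le ha0, sub_zero, smul_eq_mul,
      hIocIoo w]
  -- Step 4: key comparison
  have step4 : (∫ s in Ioo 0 a, (decRearr μ u s - c)) ≤ ∫ s in Ioo 0 a, (decRearr μ v s - c) := by
    rw [hconv _ hIu, hconv _ hIv]
    have := hstar a ha0 haM
    linarith
  -- Step 5: compare with the positive part for v
  have step5 : ENNReal.ofReal (∫ s in Ioo 0 a, (decRearr μ v s - c))
      ≤ ∫⁻ s in Ioo 0 a, ENNReal.ofReal (decRearr μ v s - c) := by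
    have hmax : Integrable (fun s => max (decRearr μ v s - c) 0) (volume.restrict (Ioo 0 a)) :=
      (hIv.sub hconst).pos_part
    have h1 : (∫ s in Ioo 0 a, (decRearr μ v s - c))
        ≤ ∫ s in Ioo 0 a, max (decRearr μ v s - c) 0 :=
      integral_mono (hIv.sub hconst) hmax fun s => le_max_left _ _
    calc ENNReal.ofReal (∫ s in Ioo 0 a, (decRearr μ v s - c))
        ≤ ENNReal.ofReal (∫ s in Ioo 0 a, max (decRearr μ v s - c) 0) :=
          ENNReal.ofReal_le_ofReal h1
      _ = ∫⁻ s in Ioo 0 a, ENNReal.ofReal (max (decRearr μ v s - c) 0) :=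
          ofReal_integral_eq_lintegral_ofReal hmax
            (Filter.Eventually.of_forall fun s => le_max_right _ _)
      _ = ∫⁻ s in Ioo 0 a, ENNReal.ofReal (decRearr μ v s - c) :=
          lintegral_congr fun s => ofReal_max_zero _
  -- Step 6: extend to Ioo 0 M
  have step6 : ∫⁻ s in Ioo 0 a, ENNReal.ofReal (decRearr μ v s - c)
      ≤ ∫⁻ s in Ioo 0 M, ENNReal.ofReal (decRearr μ v s - c) :=
    lintegral_mono' (Measure.restrict_mono hsub le_rfl) le_rfl
  calc ∫⁻ s in Ioo 0 M, ENNReal.ofReal (decRearr μ u s - c)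
      = ENNReal.ofReal (∫ s in Ioo 0 a, (decRearr μ u s - c)) := by rw [step1, step2]
    _ ≤ ENNReal.ofReal (∫ s in Ioo 0 a, (decRearr μ v s - c)) := ENNReal.ofReal_le_ofReal step4
    _ ≤ ∫⁻ s in Ioo 0 a, ENNReal.ofReal (decRearr μ v s - c) := step5
    _ ≤ ∫⁻ s in Ioo 0 M, ENNReal.ofReal (decRearr μ v s - c) := step6

end TwoFun

section Rep

lemma rep_rpow {q : ℝ} (hq : 1 < q) {x : ℝ} (hx : 0 ≤ x) :
    ENNReal.ofReal (x ^ q)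
      = ENNReal.ofReal (q * (q - 1)) *
        ∫⁻ c in Ioi (0:ℝ), ENNReal.ofReal (c ^ (q - 2)) * ENNReal.ofReal (x - c) := by
  have hq0 : (0:ℝ) < q := lt_trans zero_lt_one hq
  have hq1 : (0:ℝ) < q - 1 := by linarith
  have hq2 : (-1:ℝ) < q - 2 := by linarith
  rcases eq_or_lt_of_le hx with hx0 | hxpos
  · rw [← hx0]
    have hz : ∫⁻ c in Ioi (0:ℝ), ENNReal.ofReal (c ^ (q - 2)) * ENNReal.ofReal ((0:ℝ) - c)
        = ∫⁻ _ in Ioi (0:ℝ), 0 := by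
      refine setLIntegral_congr_fun measurableSet_Ioi
        (fun c hc => ?_)
      rw [show ENNReal.ofReal ((0:ℝ) - c) = 0 from
        ENNReal.ofReal_of_nonpos (by linarith [mem_Ioi.mp hc]), mul_zero]
    rw [hz, lintegral_zero, mul_zero, Real.zero_rpow hq0.ne', ENNReal.ofReal_zero]
  · -- x > 0
    have hsplit : Ioi (0:ℝ) = Ioo 0 x ∪ Ici x := by
      ext c
      simp only [mem_Ioi, mem_union, mem_Ioo, mem_Ici]
      constructor
      · intro h
        rcases lt_or_ge c x with h2 | h2
        · exact Or.inl ⟨h, h2⟩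
        · exact Or.inr h2
      · rintro (⟨h, _⟩ | h)
        · exact h
        · exact lt_of_lt_of_le hxpos h
    have hdisj : Disjoint (Ioo (0:ℝ) x) (Ici x) :=
      (Iio_disjoint_Ici le_rfl).mono_left Ioo_subset_Iio_self
    rw [hsplit, lintegral_union measurableSet_Ici hdisj]
    have hzero : ∫⁻ c in Ici x, ENNReal.ofReal (c ^ (q - 2)) * ENNReal.ofReal (x - c)
        = ∫⁻ _ in Ici x, 0 := by
      refine setLIntegral_congr_fun measurableSet_Ici
        (fun c hc => ?_)
      rw [show ENNReal.ofReal (x - c) = 0 from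
        ENNReal.ofReal_of_nonpos (by linarith [mem_Ici.mp hc]), mul_zero]
    rw [hzero, lintegral_zero, add_zero]
    -- now compute on Ioo 0 x
    have hi1 : IntervalIntegrable (fun c : ℝ => c ^ (q - 2)) volume 0 x :=
      intervalIntegral.intervalIntegrable_rpow' hq2
    have hi2 : IntervalIntegrable (fun c : ℝ => c ^ (q - 1)) volume 0 x :=
      intervalIntegral.intervalIntegrable_rpow' (by linarith)
    have hIoc1 : IntegrableOn (fun c : ℝ => c ^ (q - 2)) (Ioc 0 x) volume :=
      (intervalIntegrable_iff_integrableOn_Ioc_of_le hxpos.le).mp hi1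
    have hIoc2 : IntegrableOn (fun c : ℝ => c ^ (q - 1)) (Ioc 0 x) volume :=
      (intervalIntegrable_iff_integrableOn_Ioc_of_le hxpos.le).mp hi2
    have hIoo1 : IntegrableOn (fun c : ℝ => c ^ (q - 2)) (Ioo 0 x) volume :=
      hIoc1.mono_set Ioo_subset_Ioc_self
    have hIoo2 : IntegrableOn (fun c : ℝ => c ^ (q - 1)) (Ioo 0 x) volume :=
      hIoc2.mono_set Ioo_subset_Ioc_self
    have hint : IntegrableOn (fun c : ℝ => x * c ^ (q - 2) - c ^ (q - 1)) (Ioo 0 x) volume :=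
      (hIoo1.const_mul x).sub hIoo2
    have hcongr : ∀ c ∈ Ioo (0:ℝ) x,
        c ^ (q - 2) * (x - c) = x * c ^ (q - 2) - c ^ (q - 1) := by
      intro c hc
      have h1 : c ^ (q - 2) * c = c ^ (q - 1) := by
        have h2 := (Real.rpow_add hc.1 (q - 2) 1).symm
        rw [Real.rpow_one] at h2
        rw [h2, show q - 2 + 1 = q - 1 by ring]
      calc c ^ (q - 2) * (x - c) = x * c ^ (q - 2) - c ^ (q - 2) * c := by ring
        _ = x * c ^ (q - 2) - c ^ (q - 1) := by rw [h1]
    have hintf : IntegrableOn (fun c : ℝ => c ^ (q - 2) * (x - c)) (Ioo 0 x) volume :=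
      hint.congr_fun (fun c hc => (hcongr c hc).symm) measurableSet_Ioo
    have hstepm : ∫⁻ c in Ioo 0 x, ENNReal.ofReal (c ^ (q - 2)) * ENNReal.ofReal (x - c)
        = ∫⁻ c in Ioo 0 x, ENNReal.ofReal (c ^ (q - 2) * (x - c)) :=
      setLIntegral_congr_fun measurableSet_Ioo (fun c hc =>
        (ENNReal.ofReal_mul (Real.rpow_nonneg hc.1.le _)).symm)
    have hmain : ∫⁻ c in Ioo 0 x, ENNReal.ofReal (c ^ (q - 2)) * ENNReal.ofReal (x - c)
        = ENNReal.ofReal (∫ c in Ioo 0 x, c ^ (q - 2) * (x - c)) := by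
      rw [hstepm, ← ofReal_integral_eq_lintegral_ofReal hintf
        ((ae_restrict_iff' measurableSet_Ioo).2 (Filter.Eventually.of_forall fun c hc =>
          mul_nonneg (Real.rpow_nonneg hc.1.le _) (by linarith [hc.2])))]
    -- compute the real integral
    have hval : ∫ c in Ioo 0 x, c ^ (q - 2) * (x - c) = x ^ q / (q * (q - 1)) := by
      rw [setIntegral_congr_fun measurableSet_Ioo hcongr, integral_sub (hIoo1.const_mul x) hIoo2,
        integral_const_mul]
      have e1 : ∫ c in Ioo 0 x, c ^ (q - 2) = x ^ (q - 1) / (q - 1) := by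
        rw [← integral_Ioc_eq_integral_Ioo, ← intervalIntegral.integral_of_le hxpos.le,
          integral_rpow (Or.inl hq2)]
        rw [Real.zero_rpow (by linarith : q - 2 + 1 ≠ 0), show q - 2 + 1 = q - 1 by ring]
        norm_num
      have e2 : ∫ c in Ioo 0 x, c ^ (q - 1) = x ^ q / q := by
        rw [← integral_Ioc_eq_integral_Ioo, ← intervalIntegral.integral_of_le hxpos.le,
          integral_rpow (Or.inl (by linarith))]
        rw [Real.zero_rpow (by linarith : q - 1 + 1 ≠ 0), show q - 1 + 1 = q by ring]
        norm_num
      rw [e1, e2]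
      have hxq : x * x ^ (q - 1) = x ^ q := by
        have h2 := (Real.rpow_add hxpos 1 (q - 1)).symm
        rw [Real.rpow_one] at h2
        rw [h2]
        norm_num
      field_simp
      rw [mul_comm x q, mul_assoc]
      rw [hxq]
      ring
    rw [hmain, hval, ← ENNReal.ofReal_mul (by positivity)]
    congr 1
    field_simp

end Rep

section Core

variable {X : Type*} [MeasurableSpace X] {μ : Measure X} [IsFiniteMeasure μ]

lemma lintegral_rpow_decRearr_rep {f : X → ℝ} (hm : Measurable f) (hnn : ∀ x, 0 ≤ f x)
    {q : ℝ} (hq : 1 < q) :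
    ∫⁻ s in Ioo 0 (μ univ).toReal, ENNReal.ofReal (decRearr μ f s ^ q)
      = ENNReal.ofReal (q * (q - 1)) *
        ∫⁻ c in Ioi (0:ℝ), ENNReal.ofReal (c ^ (q - 2)) *
          ∫⁻ s in Ioo 0 (μ univ).toReal, ENNReal.ofReal (decRearr μ f s - c) := by
  set M := (μ univ).toReal with hM
  have h1 : ∫⁻ s in Ioo 0 M, ENNReal.ofReal (decRearr μ f s ^ q)
      = ∫⁻ s in Ioo 0 M, ENNReal.ofReal (q * (q - 1)) *
          ∫⁻ c in Ioi (0:ℝ), ENNReal.ofReal (c ^ (q - 2))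
            * ENNReal.ofReal (decRearr μ f s - c) :=
    setLIntegral_congr_fun measurableSet_Ioo (fun s hs =>
      rep_rpow hq (decRearr_nonneg hm hnn hs.1 hs.2))
  rw [h1, lintegral_const_mul' _ _ ENNReal.ofReal_ne_top]
  congr 1
  have hg := decRearr_aemeasurable (μ := μ) hm hnn
  have hF : AEMeasurable (fun p : ℝ × ℝ =>
      ENNReal.ofReal (p.2 ^ (q - 2)) * ENNReal.ofReal (decRearr μ f p.1 - p.2))
      ((volume.restrict (Ioo 0 M)).prod (volume.restrict (Ioi 0))) := by
    have h2 : AEMeasurable (fun p : ℝ × ℝ => decRearr μ f p.1)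
        ((volume.restrict (Ioo 0 M)).prod (volume.restrict (Ioi 0))) := hg.comp_fst
    have h3 : Measurable (fun p : ℝ × ℝ => ENNReal.ofReal (p.2 ^ (q - 2))) := by
      have : Measurable (fun c : ℝ => ENNReal.ofReal (c ^ (q - 2))) := by measurability
      exact this.comp measurable_snd
    exact h3.aemeasurable.mul
      (ENNReal.measurable_ofReal.comp_aemeasurable (h2.sub measurable_snd.aemeasurable))
  calc ∫⁻ s in Ioo 0 M, ∫⁻ c in Ioi (0:ℝ),
        ENNReal.ofReal (c ^ (q - 2)) * ENNReal.ofReal (decRearr μ f s - c)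
      = ∫⁻ c in Ioi (0:ℝ), ∫⁻ s in Ioo 0 M,
          ENNReal.ofReal (c ^ (q - 2)) * ENNReal.ofReal (decRearr μ f s - c) :=
        lintegral_lintegral_swap hF
    _ = ∫⁻ c in Ioi (0:ℝ), ENNReal.ofReal (c ^ (q - 2))
          * ∫⁻ s in Ioo 0 M, ENNReal.ofReal (decRearr μ f s - c) :=
        lintegral_congr fun c => lintegral_const_mul' _ _ ENNReal.ofReal_ne_top

lemma core_ineq {u v : X → ℝ} (hum : Measurable u) (hvm : Measurable v)
    (hui : Integrable u μ) (hvi : Integrable v μ)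
    (hun : ∀ x, 0 ≤ u x) (hvn : ∀ x, 0 ≤ v x)
    (hstar : ∀ t : ℝ, 0 ≤ t → t ≤ (μ univ).toReal →
      (∫ s in (0 : ℝ)..t, decRearr μ u s) ≤ ∫ s in (0 : ℝ)..t, decRearr μ v s)
    {q : ℝ} (hq : 1 ≤ q) :
    ∫⁻ s in Ioo 0 (μ univ).toReal, ENNReal.ofReal (decRearr μ u s ^ q)
      ≤ ∫⁻ s in Ioo 0 (μ univ).toReal, ENNReal.ofReal (decRearr μ v s ^ q) := by
  rcases eq_or_lt_of_le hq with h1 | h1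
  · have h2 := Phi_mono hum hvm hui hvi hun hvn hstar (le_refl (0:ℝ))
    simp only [sub_zero] at h2
    rw [← h1]
    simpa only [Real.rpow_one] using h2
  · rw [lintegral_rpow_decRearr_rep hum hun h1, lintegral_rpow_decRearr_rep hvm hvn h1]
    refine mul_le_mul_right ?_ _
    refine lintegral_mono_ae ((ae_restrict_iff' measurableSet_Ioi).2
      (Filter.Eventually.of_forall fun c hc => ?_))
    exact mul_le_mul_right (Phi_mono hum hvm hui hvi hun hvn hstar (le_of_lt hc)) _

end Core

section Main

variable {X : Type*} [MeasurableSpace X] {μ : Measure X} [IsFiniteMeasure μ]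

lemma main_meas {u v : X → ℝ} (hum : Measurable u) (hvm : Measurable v)
    (hui : Integrable u μ) (hvi : Integrable v μ)
    (hun : ∀ x, 0 ≤ u x) (hvn : ∀ x, 0 ≤ v x) (hμ : μ univ ≠ 0)
    (hstar : ∀ t : ℝ, 0 ≤ t → t ≤ (μ univ).toReal →
      (∫ s in (0 : ℝ)..t, decRearr μ u s) ≤ ∫ s in (0 : ℝ)..t, decRearr μ v s)
    (p : ℝ≥0∞) (hp : 1 ≤ p) : eLpNorm u p μ ≤ eLpNorm v p μ := by
  have hM0 : 0 < (μ univ).toReal := ENNReal.toReal_pos hμ (measure_ne_top _ _)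
  set M := (μ univ).toReal with hMdef
  by_cases hptop : p = ∞
  · subst hptop
    rw [eLpNorm_exponent_top, eLpNorm_exponent_top]
    by_cases hvtop : eLpNormEssSup v μ = ∞
    · rw [hvtop]; exact le_top
    set C := (eLpNormEssSup v μ).toReal with hCdef
    have hC0 : 0 ≤ C := ENNReal.toReal_nonneg
    have hvC : ∀ᵐ x ∂μ, v x ≤ C := by
      filter_upwards [ae_le_eLpNormEssSup (f := v) (μ := μ)] with x hx
      have h3 : ‖v x‖ ≤ C := by
        have h2 := ENNReal.toReal_mono hvtop hx
        rwa [toReal_enorm] at h2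
      have h4 : v x ≤ ‖v x‖ := by rw [Real.norm_eq_abs]; exact le_abs_self _
      linarith
    have hDv : μ {x | C < v x} = 0 := by
      have h4 := ae_iff.mp hvC
      simpa only [not_le] using h4
    have hvstar : ∀ s ∈ Ioo (0:ℝ) M, decRearr μ v s ≤ C := fun s hs =>
      (decRearr_le_iff hvm hvn hs.1 hs.2).2 (by rw [hDv]; exact zero_le)
    have hustar : ∀ t ∈ Ioo (0:ℝ) M, decRearr μ u t ≤ C := by
      intro t ht
      have hIsub : Ioc (0:ℝ) t ⊆ Ioo 0 M := fun s hs => ⟨hs.1, lt_of_le_of_lt hs.2 ht.2⟩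
      have hIu : IntervalIntegrable (decRearr μ u) volume 0 t := by
        rw [intervalIntegrable_iff_integrableOn_Ioc_of_le ht.1.le]
        exact (decRearr_integrable hum hui hun).mono_measure
          (Measure.restrict_mono hIsub le_rfl)
      have hIv : IntervalIntegrable (decRearr μ v) volume 0 t := by
        rw [intervalIntegrable_iff_integrableOn_Ioc_of_le ht.1.le]
        exact (decRearr_integrable hvm hvi hvn).mono_measure
          (Measure.restrict_mono hIsub le_rfl)
      have hae0 : ∀ᵐ s ∂(volume : Measure ℝ), s ≠ 0 := by
        rw [ae_iff]
        have hset0 : {s : ℝ | ¬ s ≠ 0} = {0} := by ext s; simp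
        rw [hset0]
        exact measure_singleton 0
      have h5 : t * decRearr μ u t ≤ t * C := by
        calc t * decRearr μ u t = ∫ _ in (0:ℝ)..t, decRearr μ u t := by
              rw [intervalIntegral.integral_const, smul_eq_mul, sub_zero]
          _ ≤ ∫ s in (0:ℝ)..t, decRearr μ u s := by
              refine intervalIntegral.integral_mono_ae_restrict ht.1.le
                intervalIntegrable_const hIu ?_
              filter_upwards [ae_restrict_of_ae hae0,
                self_mem_ae_restrict measurableSet_Icc] with s hs0 hsIcc
              have hs' : s ∈ Ioo (0:ℝ) M :=
                ⟨lt_of_le_of_ne hsIcc.1 (Ne.symm hs0), lt_of_le_of_lt hsIcc.2 ht.2⟩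
              exact decRearr_antitoneOn hum hun hs' ht hsIcc.2
          _ ≤ ∫ s in (0:ℝ)..t, decRearr μ v s := hstar t ht.1.le ht.2.le
          _ ≤ ∫ _ in (0:ℝ)..t, C := by
              refine intervalIntegral.integral_mono_ae_restrict ht.1.le hIv
                intervalIntegrable_const ?_
              filter_upwards [ae_restrict_of_ae hae0,
                self_mem_ae_restrict measurableSet_Icc] with s hs0 hsIcc
              exact hvstar s ⟨lt_of_le_of_ne hsIcc.1 (Ne.symm hs0),
                lt_of_le_of_lt hsIcc.2 ht.2⟩
          _ = t * C := by rw [intervalIntegral.integral_const, smul_eq_mul, sub_zero]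
      exact le_of_mul_le_mul_left h5 ht.1
    have hDu : μ {x | C < u x} = 0 := by
      by_contra h
      have hmtop : μ {x | C < u x} ≠ ⊤ := measure_ne_top μ _
      have hmR : 0 < (μ {x | C < u x}).toReal := ENNReal.toReal_pos h hmtop
      set t := min (M / 2) ((μ {x | C < u x}).toReal / 2) with htdef
      have ht0 : 0 < t := lt_min (by linarith) (by linarith)
      have htM : t < M := lt_of_le_of_lt (min_le_left _ _) (by linarith)
      have hkey := (decRearr_le_iff hum hun ht0 htM).1 (hustar t ⟨ht0, htM⟩)
      have hcontra : ENNReal.ofReal t < μ {x | C < u x} := by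
        calc ENNReal.ofReal t ≤ ENNReal.ofReal ((μ {x | C < u x}).toReal / 2) :=
              ENNReal.ofReal_le_ofReal (min_le_right _ _)
          _ < μ {x | C < u x} := by
              rw [ENNReal.ofReal_lt_iff_lt_toReal (by linarith) hmtop]
              linarith
      exact absurd hkey (not_le.mpr hcontra)
    have huC : ∀ᵐ x ∂μ, ‖u x‖ ≤ C := by
      have h6 : ∀ᵐ x ∂μ, u x ≤ C := by
        rw [ae_iff]
        simpa only [not_le] using hDu
      filter_upwards [h6] with x hx
      rw [Real.norm_eq_abs, abs_of_nonneg (hun x)]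
      exact hx
    calc eLpNormEssSup u μ ≤ ENNReal.ofReal C := eLpNormEssSup_le_of_ae_bound huC
      _ = eLpNormEssSup v μ := ENNReal.ofReal_toReal hvtop
  · have hp0 : p ≠ 0 := (lt_of_lt_of_le zero_lt_one hp).ne'
    set q := p.toReal with hqdef
    have hq1 : 1 ≤ q := by
      rw [hqdef, ← ENNReal.toReal_one]
      exact ENNReal.toReal_mono hptop hp
    have hq0 : (0:ℝ) < q := lt_of_lt_of_le zero_lt_one hq1
    rw [eLpNorm_eq_lintegral_rpow_enorm_toReal hp0 hptop, eLpNorm_eq_lintegral_rpow_enorm_toReal hp0 hptop]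
    refine ENNReal.rpow_le_rpow ?_ (by positivity)
    have hu_eq : ∫⁻ x, ‖u x‖ₑ ^ q ∂μ = ∫⁻ x, ENNReal.ofReal (u x ^ q) ∂μ :=
      lintegral_congr fun x => by
        rw [Real.enorm_eq_ofReal (hun x), ← ENNReal.ofReal_rpow_of_nonneg (hun x) hq0.le]
    have hv_eq : ∫⁻ x, ‖v x‖ₑ ^ q ∂μ = ∫⁻ x, ENNReal.ofReal (v x ^ q) ∂μ :=
      lintegral_congr fun x => by
        rw [Real.enorm_eq_ofReal (hvn x), ← ENNReal.ofReal_rpow_of_nonneg (hvn x) hq0.le]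
    rw [hu_eq, hv_eq, ← lintegral_rpow_decRearr hum hun hq0, ← lintegral_rpow_decRearr hvm hvn hq0]
    exact core_ineq hum hvm hui hvi hun hvn hstar hq1

end Main

end MajAux

/-- If `u, v ≥ 0` a.e. and `∫₀ᵗ u* ≤ ∫₀ᵗ v*` for all `t`, then `‖u‖_p ≤ ‖v‖_p` for all
`1 ≤ p ≤ ∞`. -/
theorem majorization_Lp_of_nonneg {X : Type*} [MeasurableSpace X] (μ : Measure X)
    [IsFiniteMeasure μ] (u v : X → ℝ) (hu : Integrable u μ) (hv : Integrable v μ)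
    (hupos : 0 ≤ᵐ[μ] u) (hvpos : 0 ≤ᵐ[μ] v)
    (hstar : ∀ t : ℝ, 0 ≤ t → t ≤ (μ univ).toReal →
      (∫ s in (0 : ℝ)..t, decRearr μ u s) ≤ ∫ s in (0 : ℝ)..t, decRearr μ v s) :
    ∀ p : ENNReal, 1 ≤ p → eLpNorm u p μ ≤ eLpNorm v p μ := by
  intro p hp
  rcases eq_or_ne (μ univ) 0 with hμ0 | hμ0
  · have hz : μ = 0 := Measure.measure_univ_eq_zero.mp hμ0
    simp [hz]
  · obtain ⟨u', hu'm, hu'nn, huu'⟩ : ∃ u' : X → ℝ, Measurable u' ∧ (∀ x, 0 ≤ u' x)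
        ∧ u =ᵐ[μ] u' := by
      refine ⟨fun x => max (hu.aemeasurable.mk u x) 0,
        (hu.aemeasurable.measurable_mk.max measurable_const), fun x => le_max_right _ _, ?_⟩
      filter_upwards [hu.aemeasurable.ae_eq_mk, hupos] with x hx h0x
      have h0x' : (0:ℝ) ≤ u x := h0x
      rw [← hx]
      exact (max_eq_left h0x').symm
    obtain ⟨v', hv'm, hv'nn, hvv'⟩ : ∃ v' : X → ℝ, Measurable v' ∧ (∀ x, 0 ≤ v' x)
        ∧ v =ᵐ[μ] v' := by
      refine ⟨fun x => max (hv.aemeasurable.mk v x) 0,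
        (hv.aemeasurable.measurable_mk.max measurable_const), fun x => le_max_right _ _, ?_⟩
      filter_upwards [hv.aemeasurable.ae_eq_mk, hvpos] with x hx h0x
      have h0x' : (0:ℝ) ≤ v x := h0x
      rw [← hx]
      exact (max_eq_left h0x').symm
    rw [eLpNorm_congr_ae huu', eLpNorm_congr_ae hvv']
    have h1 : decRearr μ u = decRearr μ u' := MajAux.decRearr_congr huu'
    have h2 : decRearr μ v = decRearr μ v' := MajAux.decRearr_congr hvv'
    rw [h1, h2] at hstar
    exact MajAux.main_meas hu'm hv'm (hu.congr huu') (hv.congr hvv') hu'nn hv'nn hμ0 hstar p hp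
end
end
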